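/- arXiv:1005.1625 — 3 statements merged into one kernel-verified Lean document; each statement's English description precedes it below -/
import Mathlib

section
/- Let A₁, B₁, C₁ be a non-overlapping Napoleon configuration for a nondegenerate triangle ABC in the Euclidean plane. Then the three segments AA₁, BB₁ and CC₁ have equal length: dist A A₁ = dist B B₁ = dist C C₁. -/
open EuclideanGeometry AffineSubspace MeasureTheory

lemma nap_dist_sq (x y : EuclideanSpace ℝ (Fin 2)) :
    dist x y ^ 2 = (x 0 - y 0)^2 + (x 1 - y 1)^2 := by
  rw [EuclideanSpace.dist_eq, Real.sq_sqrt (by positivity)]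
  simp [Fin.sum_univ_two, Real.dist_eq, sq_abs]

lemma nap_mem_line {B C p : EuclideanSpace ℝ (Fin 2)} (hp : p ∈ affineSpan ℝ {B, C}) :
    ∃ r : ℝ, ∀ i, p i - B i = r * (C i - B i) := by
  have h : (p -ᵥ B) +ᵥ B ∈ affineSpan ℝ {B, C} := by simpa using hp
  rw [vadd_left_mem_affineSpan_pair] at h
  obtain ⟨r, hr⟩ := h
  refine ⟨r, fun i => ?_⟩
  have := congrArg (· i) hr
  simpa using this.symm

lemma nap_cross_ne {B C X : EuclideanSpace ℝ (Fin 2)} (hBC : B ≠ C)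
    (hX : X ∉ affineSpan ℝ {B, C}) :
    (C 0 - B 0) * (X 1 - B 1) - (C 1 - B 1) * (X 0 - B 0) ≠ 0 := by
  intro h
  apply hX
  have hd : C 0 - B 0 ≠ 0 ∨ C 1 - B 1 ≠ 0 := by
    by_contra hc
    push_neg at hc
    apply hBC
    ext i
    fin_cases i
    · show B 0 = C 0; linarith [hc.1]
    · show B 1 = C 1; linarith [hc.2]
  have mem : ∀ r : ℝ, (∀ i, X i - B i = r * (C i - B i)) → X ∈ affineSpan ℝ {B, C} := by
    intro r hr
    have : (X -ᵥ B) +ᵥ B ∈ affineSpan ℝ {B, C} := by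
      rw [vadd_left_mem_affineSpan_pair]
      exact ⟨r, by ext i; simpa using (hr i).symm⟩
    simpa using this
  rcases hd with hd0 | hd1
  · refine mem ((X 0 - B 0)/(C 0 - B 0)) (fun i => ?_)
    fin_cases i
    · show X 0 - B 0 = _ * (C 0 - B 0); field_simp
    · show X 1 - B 1 = _ * (C 1 - B 1); field_simp; nlinarith [h]
  · refine mem ((X 1 - B 1)/(C 1 - B 1)) (fun i => ?_)
    fin_cases i
    · show X 0 - B 0 = _ * (C 0 - B 0); field_simp; nlinarith [h]
    · show X 1 - B 1 = _ * (C 1 - B 1); field_simp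

lemma nap_key_real (a0 a1 b0 b1 c0 c1 p0 p1 : ℝ)
    (E1 : (p0-b0)^2+(p1-b1)^2 = (b0-c0)^2+(b1-c1)^2)
    (E2 : (p0-c0)^2+(p1-c1)^2 = (b0-c0)^2+(b1-c1)^2)
    (hsign : ((c0-b0)*(a1-b1) - (c1-b1)*(a0-b0)) * ((c0-b0)*(p1-b1) - (c1-b1)*(p0-b0)) < 0) :
    (a0-p0)^2+(a1-p1)^2 =
      (((b0-c0)^2+(b1-c1)^2) + ((a0-c0)^2+(a1-c1)^2) + ((a0-b0)^2+(a1-b1)^2))/2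
      + Real.sqrt 3 * |(c0-b0)*(a1-b1) - (c1-b1)*(a0-b0)| := by
  have hL : 0 < (c0-b0)^2+(c1-b1)^2 := by
    by_contra hle
    push_neg at hle
    have h0 : c0-b0 = 0 := by nlinarith [sq_nonneg (c0-b0), sq_nonneg (c1-b1)]
    have h1 : c1-b1 = 0 := by nlinarith [sq_nonneg (c0-b0), sq_nonneg (c1-b1)]
    rw [h0, h1] at hsign
    norm_num at hsign
  have hdot : (p0-(b0+c0)/2)*(c0-b0) + (p1-(b1+c1)/2)*(c1-b1) = 0 := by
    linear_combination (E1 - E2)/2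
  have hq0 : (p0-(b0+c0)/2) * ((c0-b0)^2+(c1-b1)^2)
      = -(((c0-b0)*(p1-b1) - (c1-b1)*(p0-b0)) * (c1-b1)) := by
    linear_combination (c0-b0) * hdot
  have hq1 : (p1-(b1+c1)/2) * ((c0-b0)^2+(c1-b1)^2)
      = ((c0-b0)*(p1-b1) - (c1-b1)*(p0-b0)) * (c0-b0) := by
    linear_combination (c1-b1) * hdot
  have hq2 : (p0-(b0+c0)/2)^2 + (p1-(b1+c1)/2)^2 = 3/4 * ((c0-b0)^2+(c1-b1)^2) := by
    linear_combination E1 - hdot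
  have hDp2 : ((c0-b0)*(p1-b1) - (c1-b1)*(p0-b0))^2 = 3/4 * ((c0-b0)^2+(c1-b1)^2)^2 := by
    linear_combination ((c0-b0)^2+(c1-b1)^2) * hq2
      - ((p0-(b0+c0)/2)*(c0-b0) + (p1-(b1+c1)/2)*(c1-b1)) * hdot
  have habsDp : |(c0-b0)*(p1-b1) - (c1-b1)*(p0-b0)|
      = Real.sqrt 3 / 2 * ((c0-b0)^2+(c1-b1)^2) := by
    have h3 : Real.sqrt 3 ^ 2 = 3 := Real.sq_sqrt (by norm_num)
    rw [← Real.sqrt_sq_eq_abs, hDp2,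
      show (3/4:ℝ) * ((c0-b0)^2+(c1-b1)^2)^2
        = (Real.sqrt 3 / 2 * ((c0-b0)^2+(c1-b1)^2))^2 by
        linear_combination (((c0-b0)^2+(c1-b1)^2)^2/4) * h3.symm,
      Real.sqrt_sq (by positivity)]
  have hDDp : ((c0-b0)*(a1-b1) - (c1-b1)*(a0-b0)) * ((c0-b0)*(p1-b1) - (c1-b1)*(p0-b0))
      = -(Real.sqrt 3 / 2 * ((c0-b0)^2+(c1-b1)^2) * |(c0-b0)*(a1-b1) - (c1-b1)*(a0-b0)|) := by
    rw [show ((c0-b0)*(a1-b1) - (c1-b1)*(a0-b0)) * ((c0-b0)*(p1-b1) - (c1-b1)*(p0-b0))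
        = -|((c0-b0)*(a1-b1) - (c1-b1)*(a0-b0)) * ((c0-b0)*(p1-b1) - (c1-b1)*(p0-b0))| by
      rw [abs_of_neg hsign]; ring]
    rw [abs_mul, habsDp]
    ring
  have main : ((c0-b0)^2+(c1-b1)^2) * ((a0-p0)^2+(a1-p1)^2)
      = ((c0-b0)^2+(c1-b1)^2) *
        ((((b0-c0)^2+(b1-c1)^2) + ((a0-c0)^2+(a1-c1)^2) + ((a0-b0)^2+(a1-b1)^2))/2
          + Real.sqrt 3 * |(c0-b0)*(a1-b1) - (c1-b1)*(a0-b0)|) := by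
    linear_combination (-2*(a0-(b0+c0)/2) + (p0-(b0+c0)/2)) * hq0
      + (-2*(a1-(b1+c1)/2) + (p1-(b1+c1)/2)) * hq1 + hDp2 + (-2) * hDDp
  exact mul_left_cancel₀ (ne_of_gt hL) main

lemma nap_sign {A B C P : EuclideanSpace ℝ (Fin 2)} (hBC : B ≠ C)
    (hside : (affineSpan ℝ {B, C}).SOppSide A P) :
    ((C 0-B 0)*(A 1-B 1) - (C 1-B 1)*(A 0-B 0))
      * ((C 0-B 0)*(P 1-B 1) - (C 1-B 1)*(P 0-B 0)) < 0 := by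
  obtain ⟨⟨q1, hq1, q2, hq2, hray⟩, hxA, hxP⟩ := hside
  have hDp : (C 0-B 0)*(P 1-B 1) - (C 1-B 1)*(P 0-B 0) ≠ 0 := nap_cross_ne hBC hxP
  have hvA : A -ᵥ q1 ≠ 0 := fun h => hxA (by rwa [vsub_eq_zero_iff_eq.mp h])
  have hvP : q2 -ᵥ P ≠ 0 := fun h => hxP (by rwa [← vsub_eq_zero_iff_eq.mp h])
  obtain ⟨r, s, hr, hs, hrs⟩ := hray.exists_pos hvA hvP
  obtain ⟨u, hu⟩ := nap_mem_line hq1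
  obtain ⟨v, hv⟩ := nap_mem_line hq2
  have e0 : r * (A 0 - q1 0) = s * (q2 0 - P 0) := by simpa using congrArg (· 0) hrs
  have e1 : r * (A 1 - q1 1) = s * (q2 1 - P 1) := by simpa using congrArg (· 1) hrs
  have key : r * ((C 0-B 0)*(A 1-B 1) - (C 1-B 1)*(A 0-B 0))
      = -(s * ((C 0-B 0)*(P 1-B 1) - (C 1-B 1)*(P 0-B 0))) := by
    linear_combination (C 0-B 0) * e1 - (C 1-B 1) * e0
      + (r*(C 0-B 0)) * hu 1 + (s*(C 0-B 0)) * hv 1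
      - (r*(C 1-B 1)) * hu 0 - (s*(C 1-B 1)) * hv 0
  have hp2 : 0 < ((C 0-B 0)*(P 1-B 1) - (C 1-B 1)*(P 0-B 0))^2 :=
    lt_of_le_of_ne (sq_nonneg _) (Ne.symm (pow_ne_zero 2 hDp))
  have key2 : r * (((C 0-B 0)*(A 1-B 1) - (C 1-B 1)*(A 0-B 0))
      * ((C 0-B 0)*(P 1-B 1) - (C 1-B 1)*(P 0-B 0)))
      = -(s * ((C 0-B 0)*(P 1-B 1) - (C 1-B 1)*(P 0-B 0))^2) := by
    linear_combination ((C 0-B 0)*(P 1-B 1) - (C 1-B 1)*(P 0-B 0)) * key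
  by_contra hcon
  push_neg at hcon
  have h1 := mul_nonneg hr.le hcon
  have h2 := mul_pos hs hp2
  linarith

lemma nap_key (A B C P : EuclideanSpace ℝ (Fin 2)) (hBC : B ≠ C)
    (h1 : dist P B = dist B C) (h2 : dist P C = dist B C)
    (hside : (affineSpan ℝ {B, C}).SOppSide A P) :
    dist A P ^ 2 = (dist B C ^ 2 + dist A C ^ 2 + dist A B ^ 2)/2
      + Real.sqrt 3 * |(C 0-B 0)*(A 1-B 1) - (C 1-B 1)*(A 0-B 0)| := by
  have E1 : (P 0 - B 0)^2 + (P 1 - B 1)^2 = (B 0 - C 0)^2 + (B 1 - C 1)^2 := by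
    have := congrArg (· ^ 2) h1
    simpa [nap_dist_sq] using this
  have E2 : (P 0 - C 0)^2 + (P 1 - C 1)^2 = (B 0 - C 0)^2 + (B 1 - C 1)^2 := by
    have := congrArg (· ^ 2) h2
    simp only [nap_dist_sq] at this
    linarith [this]
  have hsign := nap_sign hBC hside
  have := nap_key_real (A 0) (A 1) (B 0) (B 1) (C 0) (C 1) (P 0) (P 1) E1 E2 hsign
  rw [nap_dist_sq, nap_dist_sq, nap_dist_sq, nap_dist_sq]
  exact this

theorem napoleon_equal_segments
    (A B C A₁ B₁ C₁ : EuclideanSpace ℝ (Fin 2))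
    (hABC : AffineIndependent ℝ ![A, B, C])
    (hA₁ : dist A₁ B = dist B C) (hA₁' : dist A₁ C = dist B C)
    (hB₁ : dist A B₁ = dist A C) (hB₁' : dist B₁ C = dist A C)
    (hC₁ : dist A C₁ = dist A B) (hC₁' : dist B C₁ = dist A B)
    (hsideA : (affineSpan ℝ {B, C}).SOppSide A A₁)
    (hsideB : (affineSpan ℝ {C, A}).SOppSide B B₁)
    (hsideC : (affineSpan ℝ {A, B}).SOppSide C C₁)
    : dist A A₁ = dist B B₁ ∧ dist B B₁ = dist C C₁ := by
  have hinj := hABC.injective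
  have hBC : B ≠ C := by
    intro h
    have : (1 : Fin 3) = 2 := hinj (by simpa [Matrix.cons_val_one, Matrix.head_cons] using h)
    exact absurd this (by decide)
  have hCA : C ≠ A := by
    intro h
    have : (2 : Fin 3) = 0 := hinj (by simpa [Matrix.cons_val_one, Matrix.head_cons] using h)
    exact absurd this (by decide)
  have hAB : A ≠ B := by
    intro h
    have : (0 : Fin 3) = 1 := hinj (by simpa [Matrix.cons_val_one, Matrix.head_cons] using h)
    exact absurd this (by decide)
  have hA := nap_key A B C A₁ hBC hA₁ hA₁' hsideA
  have hB := nap_key B C A B₁ hCA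
    (by rw [dist_comm C A]; exact hB₁')
    (by rw [dist_comm B₁ A, dist_comm C A]; exact hB₁) hsideB
  have hC := nap_key C A B C₁ hAB
    (by rw [dist_comm C₁ A]; exact hC₁)
    (by rw [dist_comm C₁ B]; exact hC₁') hsideC
  have habs1 : |(A 0-C 0)*(B 1-C 1) - (A 1-C 1)*(B 0-C 0)|
      = |(C 0-B 0)*(A 1-B 1) - (C 1-B 1)*(A 0-B 0)| := by
    rw [show (A 0-C 0)*(B 1-C 1) - (A 1-C 1)*(B 0-C 0)
      = (C 0-B 0)*(A 1-B 1) - (C 1-B 1)*(A 0-B 0) from by ring]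
  have habs2 : |(B 0-A 0)*(C 1-A 1) - (B 1-A 1)*(C 0-A 0)|
      = |(C 0-B 0)*(A 1-B 1) - (C 1-B 1)*(A 0-B 0)| := by
    rw [show (B 0-A 0)*(C 1-A 1) - (B 1-A 1)*(C 0-A 0)
      = (C 0-B 0)*(A 1-B 1) - (C 1-B 1)*(A 0-B 0) from by ring]
  rw [habs1] at hB
  rw [habs2] at hC
  have e1 : dist A A₁ ^ 2 = dist B B₁ ^ 2 := by
    rw [hA, hB, dist_comm C A, dist_comm B A]
    ring
  have e2 : dist B B₁ ^ 2 = dist C C₁ ^ 2 := by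
    rw [hB, hC, dist_comm C A, dist_comm B A, dist_comm C B]
    ring
  constructor
  · have := congrArg Real.sqrt e1
    rwa [Real.sqrt_sq dist_nonneg, Real.sqrt_sq dist_nonneg] at this
  · have := congrArg Real.sqrt e2
    rwa [Real.sqrt_sq dist_nonneg, Real.sqrt_sq dist_nonneg] at this
end

section
/- Let A₁, B₁, C₁ be a non-overlapping Napoleon configuration for a nondegenerate triangle ABC in the Euclidean plane. Then the circumscribed circles of the three equilateral triangles A₁BC, AB₁C and ABC₁ pass through a common point J, and this point J lies on each of the three lines AA₁, BB₁, CC₁. -/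
open EuclideanGeometry AffineSubspace MeasureTheory

private lemma pt_ext {X Y : EuclideanSpace ℝ (Fin 2)} (h0 : X 0 = Y 0) (h1 : X 1 = Y 1) :
    X = Y := by
  ext i
  fin_cases i
  · exact h0
  · exact h1

private lemma dist_sq_eq (X Y : EuclideanSpace ℝ (Fin 2)) :
    dist X Y ^ 2 = (X 0 - Y 0)^2 + (X 1 - Y 1)^2 := by
  rw [EuclideanSpace.dist_eq, Real.sq_sqrt (by positivity)]
  simp [Fin.sum_univ_two, Real.dist_eq, sq_abs]

private lemma sq_dist_pos {X Y : EuclideanSpace ℝ (Fin 2)} (h : X ≠ Y) :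
    0 < (X 0 - Y 0)^2 + (X 1 - Y 1)^2 := by
  rcases (show X 0 ≠ Y 0 ∨ X 1 ≠ Y 1 by
    by_contra hc
    push_neg at hc
    exact h (pt_ext hc.1 hc.2)) with hne | hne
  · have h1 : 0 < (X 0 - Y 0)^2 :=
      (sq_nonneg _).lt_of_ne (Ne.symm (pow_ne_zero 2 (sub_ne_zero.mpr hne)))
    nlinarith [sq_nonneg (X 1 - Y 1)]
  · have h1 : 0 < (X 1 - Y 1)^2 :=
      (sq_nonneg _).lt_of_ne (Ne.symm (pow_ne_zero 2 (sub_ne_zero.mpr hne)))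
    nlinarith [sq_nonneg (X 0 - Y 0)]

private lemma comb_coord (c : ℝ) (P Q : EuclideanSpace ℝ (Fin 2)) (i : Fin 2) :
    (c • (Q -ᵥ P) +ᵥ P) i = c * (Q i - P i) + P i := by
  simp [vsub_eq_sub, vadd_eq_add, PiLp.add_apply, PiLp.sub_apply, PiLp.smul_apply,
    smul_eq_mul]

set_option maxHeartbeats 1000000 in
private lemma nap_vertex (B C A A₁ : EuclideanSpace ℝ (Fin 2))
    (h1 : dist A₁ B = dist B C) (h2 : dist A₁ C = dist B C)
    (hside : (affineSpan ℝ {B, C}).SOppSide A A₁)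
    (hL : 0 < (C 0 - B 0)^2 + (C 1 - B 1)^2) :
    ∃ t : ℝ, t^2 = 3/4 ∧
      A₁ 0 = (B 0 + C 0)/2 - t * (C 1 - B 1) ∧
      A₁ 1 = (B 1 + C 1)/2 + t * (C 0 - B 0) ∧
      t * ((B 0 - A 0)*(C 1 - A 1) - (B 1 - A 1)*(C 0 - A 0)) < 0 := by
  have hLne : ((C 0 - B 0)^2 + (C 1 - B 1)^2) ≠ 0 := ne_of_gt hL
  have s1 : (A₁ 0 - B 0)^2 + (A₁ 1 - B 1)^2 = (B 0 - C 0)^2 + (B 1 - C 1)^2 := by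
    rw [← dist_sq_eq, ← dist_sq_eq, h1]
  have s2 : (A₁ 0 - C 0)^2 + (A₁ 1 - C 1)^2 = (B 0 - C 0)^2 + (B 1 - C 1)^2 := by
    rw [← dist_sq_eq, ← dist_sq_eq, h2]
  set t : ℝ := ((A₁ 0 - (B 0 + C 0)/2) * (-(C 1 - B 1)) + (A₁ 1 - (B 1 + C 1)/2) * (C 0 - B 0)) /
      ((C 0 - B 0)^2 + (C 1 - B 1)^2) with htdef
  have htL : t * ((C 0 - B 0)^2 + (C 1 - B 1)^2)
      = (A₁ 0 - (B 0 + C 0)/2) * (-(C 1 - B 1)) + (A₁ 1 - (B 1 + C 1)/2) * (C 0 - B 0) := by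
    rw [htdef]; exact div_mul_cancel₀ _ hLne
  clear_value t
  have e1 : (A₁ 0 - (B 0 + C 0)/2) * (C 0 - B 0) + (A₁ 1 - (B 1 + C 1)/2) * (C 1 - B 1) = 0 := by
    linear_combination (1/2) * s1 - (1/2) * s2
  have hx : A₁ 0 = (B 0 + C 0)/2 - t * (C 1 - B 1) := by
    have h' : ((C 0 - B 0)^2 + (C 1 - B 1)^2) * (A₁ 0 - ((B 0 + C 0)/2 - t * (C 1 - B 1))) = 0 := by
      linear_combination (C 0 - B 0) * e1 + (C 1 - B 1) * htL
    exact sub_eq_zero.mp ((mul_eq_zero.mp h').resolve_left hLne)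
  have hy : A₁ 1 = (B 1 + C 1)/2 + t * (C 0 - B 0) := by
    have h' : ((C 0 - B 0)^2 + (C 1 - B 1)^2) * (A₁ 1 - ((B 1 + C 1)/2 + t * (C 0 - B 0))) = 0 := by
      linear_combination (C 1 - B 1) * e1 - (C 0 - B 0) * htL
    exact sub_eq_zero.mp ((mul_eq_zero.mp h').resolve_left hLne)
  have ht2 : t^2 = 3/4 := by
    rw [hx, hy] at s1
    have h' : (t^2 - 3/4) * ((C 0 - B 0)^2 + (C 1 - B 1)^2) = 0 := by
      linear_combination s1
    have h'' := (mul_eq_zero.mp h').resolve_right hLne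
    linarith
  obtain ⟨⟨p₁, hp₁, p₂, hp₂, hray⟩, hAns, hA₁ns⟩ := hside
  have hg : ∀ p : EuclideanSpace ℝ (Fin 2), p ∈ affineSpan ℝ {B, C} →
      (p 0 - B 0) * (-(C 1 - B 1)) + (p 1 - B 1) * (C 0 - B 0) = 0 := by
    intro p hp
    obtain ⟨s, hs⟩ := vadd_left_mem_affineSpan_pair.mp
      (show (p -ᵥ B) +ᵥ B ∈ line[ℝ, B, C] by rwa [vsub_vadd])
    have hs0 : s * (C 0 - B 0) = p 0 - B 0 := by
      have := congrArg (fun v : EuclideanSpace ℝ (Fin 2) => v 0) hs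
      simpa [vsub_eq_sub, PiLp.smul_apply, PiLp.sub_apply, smul_eq_mul] using this
    have hs1 : s * (C 1 - B 1) = p 1 - B 1 := by
      have := congrArg (fun v : EuclideanSpace ℝ (Fin 2) => v 1) hs
      simpa [vsub_eq_sub, PiLp.smul_apply, PiLp.sub_apply, smul_eq_mul] using this
    rw [← hs0, ← hs1]; ring
  rcases hray with h | h | ⟨r₁, r₂, hr₁, hr₂, hr⟩
  · exact absurd (by rw [show A = p₁ from vsub_eq_zero_iff_eq.mp h]; exact hp₁) hAns
  · exact absurd (by rw [show A₁ = p₂ from (vsub_eq_zero_iff_eq.mp h).symm]; exact hp₂) hA₁ns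
  · have c0 : r₁ * (A 0 - p₁ 0) = r₂ * (p₂ 0 - A₁ 0) := by
      have := congrArg (fun v : EuclideanSpace ℝ (Fin 2) => v 0) hr
      simpa [vsub_eq_sub, PiLp.smul_apply, PiLp.sub_apply, smul_eq_mul] using this
    have c1 : r₁ * (A 1 - p₁ 1) = r₂ * (p₂ 1 - A₁ 1) := by
      have := congrArg (fun v : EuclideanSpace ℝ (Fin 2) => v 1) hr
      simpa [vsub_eq_sub, PiLp.smul_apply, PiLp.sub_apply, smul_eq_mul] using this
    have hg1 := hg p₁ hp₁
    have hg2 := hg p₂ hp₂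
    refine ⟨t, ht2, hx, hy, ?_⟩
    have key : r₁ * ((A 0 - B 0)*(-(C 1 - B 1)) + (A 1 - B 1)*(C 0 - B 0))
        = -(r₂ * (t * ((C 0 - B 0)^2 + (C 1 - B 1)^2))) := by
      rw [hx] at c0
      rw [hy] at c1
      linear_combination (-(C 1 - B 1)) * c0 + (C 0 - B 0) * c1 + r₁ * hg1 + r₂ * hg2
    have key2 : r₁ * (t * ((B 0 - A 0)*(C 1 - A 1) - (B 1 - A 1)*(C 0 - A 0)))
        = -(3/4) * (r₂ * ((C 0 - B 0)^2 + (C 1 - B 1)^2)) := by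
      linear_combination t * key + (- r₂ * ((C 0 - B 0)^2 + (C 1 - B 1)^2)) * ht2
    by_contra hcon
    push_neg at hcon
    have hnn : 0 ≤ r₁ * (t * ((B 0 - A 0)*(C 1 - A 1) - (B 1 - A 1)*(C 0 - A 0))) :=
      mul_nonneg hr₁.le hcon
    rw [key2] at hnn
    linarith [mul_pos hr₂ hL]


set_option maxHeartbeats 1000000 in
private lemma circle_key_a (u0 u1 v0 v1 t j0 j1 w0 w1 rr : ℝ)
    (ht2 : t^2 = 3/4) (htne : t ≠ 0)
    (hl : (1*v1^2 + 1*v0^2 + -2*u1*v1 + 1*u1^2 + -2*u0*v0 + 1*u0^2) ≠ 0) (hdd : (-1*v1^2*t + -1*v0^2*t + 1*u1*v1*t + (-3/2)*u1*v0 + -1*u1^2*t + (3/2)*u0*v1 + 1*u0*v0*t + -1*u0^2*t) ≠ 0)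
    (hJ0 : j0 * (-1*v1^2*t + -1*v0^2*t + 1*u1*v1*t + (-3/2)*u1*v0 + -1*u1^2*t + (3/2)*u0*v1 + 1*u0*v0*t + -1*u0^2*t) = ((3/4)*u1*v1^2 + (-1/4)*u1*v0^2 + (-3/4)*u1^2*v1 + (-1/2)*u1^2*v0*t + (-1/2)*u0*v1^2*t + 1*u0*v0*v1 + (-1/2)*u0*v0^2*t + -1*u0*u1*v0 + (1/4)*u0^2*v1 + (-1/2)*u0^2*v0*t)) (hJ1 : j1 * (-1*v1^2*t + -1*v0^2*t + 1*u1*v1*t + (-3/2)*u1*v0 + -1*u1^2*t + (3/2)*u0*v1 + 1*u0*v0*t + -1*u0^2*t) = ((-1/2)*u1*v1^2*t + -1*u1*v0*v1 + (-1/2)*u1*v0^2*t + (-1/2)*u1^2*v1*t + (-1/4)*u1^2*v0 + (1/4)*u0*v1^2 + (-3/4)*u0*v0^2 + 1*u0*u1*v1 + (-1/2)*u0^2*v1*t + (3/4)*u0^2*v0))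
    (hq1 : (w0 - (-1*v1*t + (1/2)*v0 + 1*u1*t + (1/2)*u0))^2 + (w1 - ((1/2)*v1 + 1*v0*t + (1/2)*u1 + -1*u0*t))^2 = rr^2)
    (hq2 : (w0 - (1*u0))^2 + (w1 - (1*u1))^2 = rr^2)
    (hq3 : (w0 - (1*v0))^2 + (w1 - (1*v1))^2 = rr^2) :
    (w0 - j0)^2 + (w1 - j1)^2 = rr^2 := by
  have h4t : (4*t*(1*v1^2 + 1*v0^2 + -2*u1*v1 + 1*u1^2 + -2*u0*v0 + 1*u0^2)) ≠ 0 := by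
    intro h
    rcases mul_eq_zero.mp h with h | h
    · rcases mul_eq_zero.mp h with h | h
      · norm_num at h
      · exact htne h
    · exact hl h
  have e0 : (4*t*(1*v1^2 + 1*v0^2 + -2*u1*v1 + 1*u1^2 + -2*u0*v0 + 1*u0^2)) * (w0 - ((-1/3)*v1*t + (1/2)*v0 + (1/3)*u1*t + (1/2)*u0)) = 0 := by
    linear_combination ((2*v1 + -2*u1))*hq1 + ((-1*v1 + 2*v0*t + 1*u1 + -2*u0*t))*hq2 + ((-1*v1 + -2*v0*t + 1*u1 + 2*u0*t))*hq3 + (((-2/3)*v1^3 + (-2/3)*v0^2*v1 + 2*u1*v1^2 + (2/3)*u1*v0^2 + -2*u1^2*v1 + (2/3)*u1^3 + (4/3)*u0*v0*v1 + (-4/3)*u0*u1*v0 + (-2/3)*u0^2*v1 + (2/3)*u0^2*u1))*ht2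
  have e1 : (4*t*(1*v1^2 + 1*v0^2 + -2*u1*v1 + 1*u1^2 + -2*u0*v0 + 1*u0^2)) * (w1 - ((1/2)*v1 + (1/3)*v0*t + (1/2)*u1 + (-1/3)*u0*t)) = 0 := by
    linear_combination ((-2*v0 + 2*u0))*hq1 + ((2*v1*t + 1*v0 + -2*u1*t + -1*u0))*hq2 + ((-2*v1*t + 1*v0 + 2*u1*t + -1*u0))*hq3 + (((2/3)*v0*v1^2 + (2/3)*v0^3 + (-4/3)*u1*v0*v1 + (2/3)*u1^2*v0 + (-2/3)*u0*v1^2 + -2*u0*v0^2 + (4/3)*u0*u1*v1 + (-2/3)*u0*u1^2 + 2*u0^2*v0 + (-2/3)*u0^3))*ht2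
  have ho0 : w0 = ((-1/3)*v1*t + (1/2)*v0 + (1/3)*u1*t + (1/2)*u0) := sub_eq_zero.mp ((mul_eq_zero.mp e0).resolve_left h4t)
  have ho1 : w1 = ((1/2)*v1 + (1/3)*v0*t + (1/2)*u1 + (-1/3)*u0*t) := sub_eq_zero.mp ((mul_eq_zero.mp e1).resolve_left h4t)
  rw [ho0, ho1] at hq2
  have hr2 : rr^2 = (1*v1^2 + 1*v0^2 + -2*u1*v1 + 1*u1^2 + -2*u0*v0 + 1*u0^2)/3 := by
    linear_combination (-1)*hq2 + (((1/9)*v1^2 + (1/9)*v0^2 + (-2/9)*u1*v1 + (1/9)*u1^2 + (-2/9)*u0*v0 + (1/9)*u0^2))*ht2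
  have m0 : (-1*v1^2*t + -1*v0^2*t + 1*u1*v1*t + (-3/2)*u1*v0 + -1*u1^2*t + (3/2)*u0*v1 + 1*u0*v0*t + -1*u0^2*t) * (((-1/3)*v1*t + (1/2)*v0 + (1/3)*u1*t + (1/2)*u0) - j0) = ((1/4)*v1^3 + (-1/2)*v0*v1^2*t + (1/4)*v0^2*v1 + (-1/2)*v0^3*t + (-5/4)*u1*v1^2 + 1*u1*v0*v1*t + (-3/4)*u1*v0^2 + (5/4)*u1^2*v1 + (-1/2)*u1^2*v0*t + (-1/4)*u1^3 + (-1/2)*u0*v1^2*t + (-1/2)*u0*v0*v1 + (1/2)*u0*v0^2*t + 1*u0*u1*v1*t + (1/2)*u0*u1*v0 + (-1/2)*u0*u1^2*t + (3/4)*u0^2*v1 + (1/2)*u0^2*v0*t + (-1/4)*u0^2*u1 + (-1/2)*u0^3*t) := by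
    linear_combination (-1)*hJ0 + (((1/3)*v1^3 + (1/3)*v0^2*v1 + (-2/3)*u1*v1^2 + (-1/3)*u1*v0^2 + (2/3)*u1^2*v1 + (-1/3)*u1^3 + (-1/3)*u0*v0*v1 + (1/3)*u0*u1*v0 + (1/3)*u0^2*v1 + (-1/3)*u0^2*u1))*ht2
  have m1 : (-1*v1^2*t + -1*v0^2*t + 1*u1*v1*t + (-3/2)*u1*v0 + -1*u1^2*t + (3/2)*u0*v1 + 1*u0*v0*t + -1*u0^2*t) * (((1/2)*v1 + (1/3)*v0*t + (1/2)*u1 + (-1/3)*u0*t) - j1) = ((-1/2)*v1^3*t + (-1/4)*v0*v1^2 + (-1/2)*v0^2*v1*t + (-1/4)*v0^3 + (1/2)*u1*v1^2*t + (1/2)*u1*v0*v1 + (-1/2)*u1*v0^2*t + (1/2)*u1^2*v1*t + (-3/4)*u1^2*v0 + (-1/2)*u1^3*t + (3/4)*u0*v1^2 + 1*u0*v0*v1*t + (5/4)*u0*v0^2 + (-1/2)*u0*u1*v1 + 1*u0*u1*v0*t + (1/4)*u0*u1^2 + (-1/2)*u0^2*v1*t + (-5/4)*u0^2*v0 + (-1/2)*u0^2*u1*t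 + (1/4)*u0^3) := by
    linear_combination (-1)*hJ1 + (((-1/3)*v0*v1^2 + (-1/3)*v0^3 + (1/3)*u1*v0*v1 + (-1/3)*u1^2*v0 + (1/3)*u0*v1^2 + (2/3)*u0*v0^2 + (-1/3)*u0*u1*v1 + (1/3)*u0*u1^2 + (-2/3)*u0^2*v0 + (1/3)*u0^3))*ht2
  have key : (-1*v1^2*t + -1*v0^2*t + 1*u1*v1*t + (-3/2)*u1*v0 + -1*u1^2*t + (3/2)*u0*v1 + 1*u0*v0*t + -1*u0^2*t)^2 * ((((-1/3)*v1*t + (1/2)*v0 + (1/3)*u1*t + (1/2)*u0) - j0)^2 + (((1/2)*v1 + (1/3)*v0*t + (1/2)*u1 + (-1/3)*u0*t) - j1)^2) = (-1*v1^2*t + -1*v0^2*t + 1*u1*v1*t + (-3/2)*u1*v0 + -1*u1^2*t + (3/2)*u0*v1 + 1*u0*v0*t + -1*u0^2*t)^2 * ((1*v1^2 + 1*v0^2 + -2*u1*v1 + 1*u1^2 + -2*u0*v0 + 1*u0^2)/3) := by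
    linear_combination ((-1*v1^2*t + -1*v0^2*t + 1*u1*v1*t + (-3/2)*u1*v0 + -1*u1^2*t + (3/2)*u0*v1 + 1*u0*v0*t + -1*u0^2*t)*(((-1/3)*v1*t + (1/2)*v0 + (1/3)*u1*t + (1/2)*u0) - j0) + ((1/4)*v1^3 + (-1/2)*v0*v1^2*t + (1/4)*v0^2*v1 + (-1/2)*v0^3*t + (-5/4)*u1*v1^2 + 1*u1*v0*v1*t + (-3/4)*u1*v0^2 + (5/4)*u1^2*v1 + (-1/2)*u1^2*v0*t + (-1/4)*u1^3 + (-1/2)*u0*v1^2*t + (-1/2)*u0*v0*v1 + (1/2)*u0*v0^2*t + 1*u0*u1*v1*t + (1/2)*u0*u1*v0 + (-1/2)*u0*u1^2*t + (3/4)*u0^2*v1 + (1/2)*u0^2*v0*t + (-1/4)*u0^2*u1 + (-1/2)*u0^3*t))*m0 + ((-1*v1^2*t + -1*v0^2*t + 1*u1*v1*t + (-3/2)*u1*v0 + -1*u1^2*t + (3/2)*u0*v1 + 1*u0*v0*t + -1*u0^2*t)*(((1/2)*v1 + (1/3)*v0*t + (1/2)*u1 + (-1/3)*u0*t) - j1)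 + ((-1/2)*v1^3*t + (-1/4)*v0*v1^2 + (-1/2)*v0^2*v1*t + (-1/4)*v0^3 + (1/2)*u1*v1^2*t + (1/2)*u1*v0*v1 + (-1/2)*u1*v0^2*t + (1/2)*u1^2*v1*t + (-3/4)*u1^2*v0 + (-1/2)*u1^3*t + (3/4)*u0*v1^2 + 1*u0*v0*v1*t + (5/4)*u0*v0^2 + (-1/2)*u0*u1*v1 + 1*u0*u1*v0*t + (1/4)*u0*u1^2 + (-1/2)*u0^2*v1*t + (-5/4)*u0^2*v0 + (-1/2)*u0^2*u1*t + (1/4)*u0^3))*m1 + (((-1/12)*v1^6 + (-1/4)*v0^2*v1^4 + (-1/4)*v0^4*v1^2 + (-1/12)*v0^6 + (5/6)*u1*v1^5 + (5/3)*u1*v0^2*v1^3 + (5/6)*u1*v0^4*v1 + (-35/12)*u1^2*v1^4 + (-19/6)*u1^2*v0^2*v1^2 + (-1/4)*u1^2*v0^4 + (13/3)*u1^3*v1^3 + (5/3)*u1^3*v0^2*v1 + (-35/12)*u1^4*v1^2 + (-1/4)*u1^4*v0^2 + (5/6)*u1^5*v1 + (-1/12)*u1^6 + (5/6)*u0*v0*v1^4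 + (5/3)*u0*v0^3*v1^2 + (5/6)*u0*v0^5 + (-16/3)*u0*u1*v0*v1^3 + (-16/3)*u0*u1*v0^3*v1 + (29/3)*u0*u1^2*v0*v1^2 + (5/3)*u0*u1^2*v0^3 + (-16/3)*u0*u1^3*v0*v1 + (5/6)*u0*u1^4*v0 + (-1/4)*u0^2*v1^4 + (-19/6)*u0^2*v0^2*v1^2 + (-35/12)*u0^2*v0^4 + (5/3)*u0^2*u1*v1^3 + (29/3)*u0^2*u1*v0^2*v1 + (-19/6)*u0^2*u1^2*v1^2 + (-19/6)*u0^2*u1^2*v0^2 + (5/3)*u0^2*u1^3*v1 + (-1/4)*u0^2*u1^4 + (5/3)*u0^3*v0*v1^2 + (13/3)*u0^3*v0^3 + (-16/3)*u0^3*u1*v0*v1 + (5/3)*u0^3*u1^2*v0 + (-1/4)*u0^4*v1^2 + (-35/12)*u0^4*v0^2 + (5/6)*u0^4*u1*v1 + (-1/4)*u0^4*u1^2 + (5/6)*u0^5*v0 + (-1/12)*u0^6))*ht2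
  have key2 : (((-1/3)*v1*t + (1/2)*v0 + (1/3)*u1*t + (1/2)*u0) - j0)^2 + (((1/2)*v1 + (1/3)*v0*t + (1/2)*u1 + (-1/3)*u0*t) - j1)^2 = (1*v1^2 + 1*v0^2 + -2*u1*v1 + 1*u1^2 + -2*u0*v0 + 1*u0^2)/3 :=
    mul_left_cancel₀ (pow_ne_zero 2 hdd) key
  rw [ho0, ho1, hr2]
  exact key2

set_option maxHeartbeats 1000000 in
private lemma circle_key_b (u0 u1 v0 v1 t j0 j1 w0 w1 rr : ℝ)
    (ht2 : t^2 = 3/4) (htne : t ≠ 0)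
    (hl : (1*v1^2 + 1*v0^2) ≠ 0) (hdd : (-1*v1^2*t + -1*v0^2*t + 1*u1*v1*t + (-3/2)*u1*v0 + -1*u1^2*t + (3/2)*u0*v1 + 1*u0*v0*t + -1*u0^2*t) ≠ 0)
    (hJ0 : j0 * (-1*v1^2*t + -1*v0^2*t + 1*u1*v1*t + (-3/2)*u1*v0 + -1*u1^2*t + (3/2)*u0*v1 + 1*u0*v0*t + -1*u0^2*t) = ((3/4)*u1*v1^2 + (-1/4)*u1*v0^2 + (-3/4)*u1^2*v1 + (-1/2)*u1^2*v0*t + (-1/2)*u0*v1^2*t + 1*u0*v0*v1 + (-1/2)*u0*v0^2*t + -1*u0*u1*v0 + (1/4)*u0^2*v1 + (-1/2)*u0^2*v0*t)) (hJ1 : j1 * (-1*v1^2*t + -1*v0^2*t + 1*u1*v1*t + (-3/2)*u1*v0 + -1*u1^2*t + (3/2)*u0*v1 + 1*u0*v0*t + -1*u0^2*t) = ((-1/2)*u1*v1^2*t + -1*u1*v0*v1 + (-1/2)*u1*v0^2*t + (-1/2)*u1^2*v1*t + (-1/4)*u1^2*v0 + (1/4)*u0*v1^2 + (-3/4)*u0*v0^2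 + 1*u0*u1*v1 + (-1/2)*u0^2*v1*t + (3/4)*u0^2*v0))
    (hq1 : (w0 - 0)^2 + (w1 - 0)^2 = rr^2)
    (hq2 : (w0 - (1*v1*t + (1/2)*v0))^2 + (w1 - ((1/2)*v1 + -1*v0*t))^2 = rr^2)
    (hq3 : (w0 - (1*v0))^2 + (w1 - (1*v1))^2 = rr^2) :
    (w0 - j0)^2 + (w1 - j1)^2 = rr^2 := by
  have h4t : (4*t*(1*v1^2 + 1*v0^2)) ≠ 0 := by
    intro h
    rcases mul_eq_zero.mp h with h | h
    · rcases mul_eq_zero.mp h with h | h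
      · norm_num at h
      · exact htne h
    · exact hl h
  have e0 : (4*t*(1*v1^2 + 1*v0^2)) * (w0 - ((1/3)*v1*t + (1/2)*v0)) = 0 := by
    linear_combination ((1*v1 + 2*v0*t))*hq1 + ((-2*v1))*hq2 + ((1*v1 + -2*v0*t))*hq3 + (((2/3)*v1^3 + (2/3)*v0^2*v1))*ht2
  have e1 : (4*t*(1*v1^2 + 1*v0^2)) * (w1 - ((1/2)*v1 + (-1/3)*v0*t)) = 0 := by
    linear_combination ((2*v1*t + -1*v0))*hq1 + ((2*v0))*hq2 + ((-2*v1*t + -1*v0))*hq3 + (((-2/3)*v0*v1^2 + (-2/3)*v0^3))*ht2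
  have ho0 : w0 = ((1/3)*v1*t + (1/2)*v0) := sub_eq_zero.mp ((mul_eq_zero.mp e0).resolve_left h4t)
  have ho1 : w1 = ((1/2)*v1 + (-1/3)*v0*t) := sub_eq_zero.mp ((mul_eq_zero.mp e1).resolve_left h4t)
  rw [ho0, ho1] at hq2
  have hr2 : rr^2 = (1*v1^2 + 1*v0^2)/3 := by
    linear_combination (-1)*hq2 + (((4/9)*v1^2 + (4/9)*v0^2))*ht2
  have m0 : (-1*v1^2*t + -1*v0^2*t + 1*u1*v1*t + (-3/2)*u1*v0 + -1*u1^2*t + (3/2)*u0*v1 + 1*u0*v0*t + -1*u0^2*t) * (((1/3)*v1*t + (1/2)*v0) - j0) = ((-1/4)*v1^3 + (-1/2)*v0*v1^2*t + (-1/4)*v0^2*v1 + (-1/2)*v0^3*t + (-1/2)*u1*v1^2 + (-1/2)*u1*v0^2 + (1/2)*u1^2*v1 + 1*u0*v1^2*t + 1*u0*v0^2*t + 1*u0*u1*v0 + (-1/2)*u0^2*v1) := by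
    linear_combination (-1)*hJ0 + (((-1/3)*v1^3 + (-1/3)*v0^2*v1 + (1/3)*u1*v1^2 + (-1/3)*u1^2*v1 + (1/3)*u0*v0*v1 + (-1/3)*u0^2*v1))*ht2
  have m1 : (-1*v1^2*t + -1*v0^2*t + 1*u1*v1*t + (-3/2)*u1*v0 + -1*u1^2*t + (3/2)*u0*v1 + 1*u0*v0*t + -1*u0^2*t) * (((1/2)*v1 + (-1/3)*v0*t) - j1) = ((-1/2)*v1^3*t + (1/4)*v0*v1^2 + (-1/2)*v0^2*v1*t + (1/4)*v0^3 + 1*u1*v1^2*t + 1*u1*v0^2*t + (1/2)*u1^2*v0 + (1/2)*u0*v1^2 + (1/2)*u0*v0^2 + -1*u0*u1*v1 + (-1/2)*u0^2*v0) := by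
    linear_combination (-1)*hJ1 + (((1/3)*v0*v1^2 + (1/3)*v0^3 + (-1/3)*u1*v0*v1 + (1/3)*u1^2*v0 + (-1/3)*u0*v0^2 + (1/3)*u0^2*v0))*ht2
  have key : (-1*v1^2*t + -1*v0^2*t + 1*u1*v1*t + (-3/2)*u1*v0 + -1*u1^2*t + (3/2)*u0*v1 + 1*u0*v0*t + -1*u0^2*t)^2 * ((((1/3)*v1*t + (1/2)*v0) - j0)^2 + (((1/2)*v1 + (-1/3)*v0*t) - j1)^2) = (-1*v1^2*t + -1*v0^2*t + 1*u1*v1*t + (-3/2)*u1*v0 + -1*u1^2*t + (3/2)*u0*v1 + 1*u0*v0*t + -1*u0^2*t)^2 * ((1*v1^2 + 1*v0^2)/3) := by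
    linear_combination ((-1*v1^2*t + -1*v0^2*t + 1*u1*v1*t + (-3/2)*u1*v0 + -1*u1^2*t + (3/2)*u0*v1 + 1*u0*v0*t + -1*u0^2*t)*(((1/3)*v1*t + (1/2)*v0) - j0) + ((-1/4)*v1^3 + (-1/2)*v0*v1^2*t + (-1/4)*v0^2*v1 + (-1/2)*v0^3*t + (-1/2)*u1*v1^2 + (-1/2)*u1*v0^2 + (1/2)*u1^2*v1 + 1*u0*v1^2*t + 1*u0*v0^2*t + 1*u0*u1*v0 + (-1/2)*u0^2*v1))*m0 + ((-1*v1^2*t + -1*v0^2*t + 1*u1*v1*t + (-3/2)*u1*v0 + -1*u1^2*t + (3/2)*u0*v1 + 1*u0*v0*t + -1*u0^2*t)*(((1/2)*v1 + (-1/3)*v0*t) - j1) + ((-1/2)*v1^3*t + (1/4)*v0*v1^2 + (-1/2)*v0^2*v1*t + (1/4)*v0^3 + 1*u1*v1^2*t + 1*u1*v0^2*t + (1/2)*u1^2*v0 + (1/2)*u0*v1^2 + (1/2)*u0*v0^2 + -1*u0*u1*v1 + (-1/2)*u0^2*v0))*m1 + (((-1/12)*v1^6 + (-1/4)*v0^2*v1^4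 + (-1/4)*v0^4*v1^2 + (-1/12)*v0^6 + (-1/3)*u1*v1^5 + (-2/3)*u1*v0^2*v1^3 + (-1/3)*u1*v0^4*v1 + (1/3)*u1^2*v0^2*v1^2 + (1/3)*u1^2*v0^4 + (2/3)*u1^3*v1^3 + (2/3)*u1^3*v0^2*v1 + (-1/3)*u1^4*v1^2 + (-1/3)*u1^4*v0^2 + (-1/3)*u0*v0*v1^4 + (-2/3)*u0*v0^3*v1^2 + (-1/3)*u0*v0^5 + (-2/3)*u0*u1*v0*v1^3 + (-2/3)*u0*u1*v0^3*v1 + (2/3)*u0*u1^2*v0*v1^2 + (2/3)*u0*u1^2*v0^3 + (1/3)*u0^2*v1^4 + (1/3)*u0^2*v0^2*v1^2 + (2/3)*u0^2*u1*v1^3 + (2/3)*u0^2*u1*v0^2*v1 + (-2/3)*u0^2*u1^2*v1^2 + (-2/3)*u0^2*u1^2*v0^2 + (2/3)*u0^3*v0*v1^2 + (2/3)*u0^3*v0^3 + (-1/3)*u0^4*v1^2 + (-1/3)*u0^4*v0^2))*ht2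
  have key2 : (((1/3)*v1*t + (1/2)*v0) - j0)^2 + (((1/2)*v1 + (-1/3)*v0*t) - j1)^2 = (1*v1^2 + 1*v0^2)/3 :=
    mul_left_cancel₀ (pow_ne_zero 2 hdd) key
  rw [ho0, ho1, hr2]
  exact key2

set_option maxHeartbeats 1000000 in
private lemma circle_key_c (u0 u1 v0 v1 t j0 j1 w0 w1 rr : ℝ)
    (ht2 : t^2 = 3/4) (htne : t ≠ 0)
    (hl : (1*u1^2 + 1*u0^2) ≠ 0) (hdd : (-1*v1^2*t + -1*v0^2*t + 1*u1*v1*t + (-3/2)*u1*v0 + -1*u1^2*t + (3/2)*u0*v1 + 1*u0*v0*t + -1*u0^2*t) ≠ 0)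
    (hJ0 : j0 * (-1*v1^2*t + -1*v0^2*t + 1*u1*v1*t + (-3/2)*u1*v0 + -1*u1^2*t + (3/2)*u0*v1 + 1*u0*v0*t + -1*u0^2*t) = ((3/4)*u1*v1^2 + (-1/4)*u1*v0^2 + (-3/4)*u1^2*v1 + (-1/2)*u1^2*v0*t + (-1/2)*u0*v1^2*t + 1*u0*v0*v1 + (-1/2)*u0*v0^2*t + -1*u0*u1*v0 + (1/4)*u0^2*v1 + (-1/2)*u0^2*v0*t)) (hJ1 : j1 * (-1*v1^2*t + -1*v0^2*t + 1*u1*v1*t + (-3/2)*u1*v0 + -1*u1^2*t + (3/2)*u0*v1 + 1*u0*v0*t + -1*u0^2*t) = ((-1/2)*u1*v1^2*t + -1*u1*v0*v1 + (-1/2)*u1*v0^2*t + (-1/2)*u1^2*v1*t + (-1/4)*u1^2*v0 + (1/4)*u0*v1^2 + (-3/4)*u0*v0^2 + 1*u0*u1*v1 + (-1/2)*u0^2*v1*t + (3/4)*u0^2*v0))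
    (hq1 : (w0 - 0)^2 + (w1 - 0)^2 = rr^2)
    (hq2 : (w0 - (1*u0))^2 + (w1 - (1*u1))^2 = rr^2)
    (hq3 : (w0 - (-1*u1*t + (1/2)*u0))^2 + (w1 - ((1/2)*u1 + 1*u0*t))^2 = rr^2) :
    (w0 - j0)^2 + (w1 - j1)^2 = rr^2 := by
  have h4t : (4*t*(1*u1^2 + 1*u0^2)) ≠ 0 := by
    intro h
    rcases mul_eq_zero.mp h with h | h
    · rcases mul_eq_zero.mp h with h | h
      · norm_num at h
      · exact htne h
    · exact hl h
  have e0 : (4*t*(1*u1^2 + 1*u0^2)) * (w0 - ((-1/3)*u1*t + (1/2)*u0)) = 0 := by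
    linear_combination ((-1*u1 + 2*u0*t))*hq1 + ((-1*u1 + -2*u0*t))*hq2 + ((2*u1))*hq3 + (((-2/3)*u1^3 + (-2/3)*u0^2*u1))*ht2
  have e1 : (4*t*(1*u1^2 + 1*u0^2)) * (w1 - ((1/2)*u1 + (1/3)*u0*t)) = 0 := by
    linear_combination ((2*u1*t + 1*u0))*hq1 + ((-2*u1*t + 1*u0))*hq2 + ((-2*u0))*hq3 + (((2/3)*u0*u1^2 + (2/3)*u0^3))*ht2
  have ho0 : w0 = ((-1/3)*u1*t + (1/2)*u0) := sub_eq_zero.mp ((mul_eq_zero.mp e0).resolve_left h4t)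
  have ho1 : w1 = ((1/2)*u1 + (1/3)*u0*t) := sub_eq_zero.mp ((mul_eq_zero.mp e1).resolve_left h4t)
  rw [ho0, ho1] at hq2
  have hr2 : rr^2 = (1*u1^2 + 1*u0^2)/3 := by
    linear_combination (-1)*hq2 + (((1/9)*u1^2 + (1/9)*u0^2))*ht2
  have m0 : (-1*v1^2*t + -1*v0^2*t + 1*u1*v1*t + (-3/2)*u1*v0 + -1*u1^2*t + (3/2)*u0*v1 + 1*u0*v0*t + -1*u0^2*t) * (((-1/3)*u1*t + (1/2)*u0) - j0) = ((-1/2)*u1*v1^2 + (1/2)*u1*v0^2 + (1/2)*u1^2*v1 + 1*u1^2*v0*t + (1/4)*u1^3 + -1*u0*v0*v1 + (-1/2)*u0*u1^2*t + (1/2)*u0^2*v1 + 1*u0^2*v0*t + (1/4)*u0^2*u1 + (-1/2)*u0^3*t) := by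
    linear_combination (-1)*hJ0 + (((1/3)*u1*v1^2 + (1/3)*u1*v0^2 + (-1/3)*u1^2*v1 + (1/3)*u1^3 + (-1/3)*u0*u1*v0 + (1/3)*u0^2*u1))*ht2
  have m1 : (-1*v1^2*t + -1*v0^2*t + 1*u1*v1*t + (-3/2)*u1*v0 + -1*u1^2*t + (3/2)*u0*v1 + 1*u0*v0*t + -1*u0^2*t) * (((1/2)*u1 + (1/3)*u0*t) - j1) = (1*u1*v0*v1 + 1*u1^2*v1*t + (-1/2)*u1^2*v0 + (-1/2)*u1^3*t + (-1/2)*u0*v1^2 + (1/2)*u0*v0^2 + (-1/4)*u0*u1^2 + 1*u0^2*v1*t + (-1/2)*u0^2*v0 + (-1/2)*u0^2*u1*t + (-1/4)*u0^3) := by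
    linear_combination (-1)*hJ1 + (((-1/3)*u0*v1^2 + (-1/3)*u0*v0^2 + (1/3)*u0*u1*v1 + (-1/3)*u0*u1^2 + (1/3)*u0^2*v0 + (-1/3)*u0^3))*ht2
  have key : (-1*v1^2*t + -1*v0^2*t + 1*u1*v1*t + (-3/2)*u1*v0 + -1*u1^2*t + (3/2)*u0*v1 + 1*u0*v0*t + -1*u0^2*t)^2 * ((((-1/3)*u1*t + (1/2)*u0) - j0)^2 + (((1/2)*u1 + (1/3)*u0*t) - j1)^2) = (-1*v1^2*t + -1*v0^2*t + 1*u1*v1*t + (-3/2)*u1*v0 + -1*u1^2*t + (3/2)*u0*v1 + 1*u0*v0*t + -1*u0^2*t)^2 * ((1*u1^2 + 1*u0^2)/3) := by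
    linear_combination ((-1*v1^2*t + -1*v0^2*t + 1*u1*v1*t + (-3/2)*u1*v0 + -1*u1^2*t + (3/2)*u0*v1 + 1*u0*v0*t + -1*u0^2*t)*(((-1/3)*u1*t + (1/2)*u0) - j0) + ((-1/2)*u1*v1^2 + (1/2)*u1*v0^2 + (1/2)*u1^2*v1 + 1*u1^2*v0*t + (1/4)*u1^3 + -1*u0*v0*v1 + (-1/2)*u0*u1^2*t + (1/2)*u0^2*v1 + 1*u0^2*v0*t + (1/4)*u0^2*u1 + (-1/2)*u0^3*t))*m0 + ((-1*v1^2*t + -1*v0^2*t + 1*u1*v1*t + (-3/2)*u1*v0 + -1*u1^2*t + (3/2)*u0*v1 + 1*u0*v0*t + -1*u0^2*t)*(((1/2)*u1 + (1/3)*u0*t) - j1) + (1*u1*v0*v1 + 1*u1^2*v1*t + (-1/2)*u1^2*v0 + (-1/2)*u1^3*t + (-1/2)*u0*v1^2 + (1/2)*u0*v0^2 + (-1/4)*u0*u1^2 + 1*u0^2*v1*t + (-1/2)*u0^2*v0 + (-1/2)*u0^2*u1*t + (-1/4)*u0^3))*m1 + (((-1/3)*u1^2*v1^4 + (-2/3)*u1^2*v0^2*v1^2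 + (-1/3)*u1^2*v0^4 + (2/3)*u1^3*v1^3 + (2/3)*u1^3*v0^2*v1 + (1/3)*u1^4*v0^2 + (-1/3)*u1^5*v1 + (-1/12)*u1^6 + (2/3)*u0*u1^2*v0*v1^2 + (2/3)*u0*u1^2*v0^3 + (-2/3)*u0*u1^3*v0*v1 + (-1/3)*u0*u1^4*v0 + (-1/3)*u0^2*v1^4 + (-2/3)*u0^2*v0^2*v1^2 + (-1/3)*u0^2*v0^4 + (2/3)*u0^2*u1*v1^3 + (2/3)*u0^2*u1*v0^2*v1 + (1/3)*u0^2*u1^2*v1^2 + (1/3)*u0^2*u1^2*v0^2 + (-2/3)*u0^2*u1^3*v1 + (-1/4)*u0^2*u1^4 + (2/3)*u0^3*v0*v1^2 + (2/3)*u0^3*v0^3 + (-2/3)*u0^3*u1*v0*v1 + (-2/3)*u0^3*u1^2*v0 + (1/3)*u0^4*v1^2 + (-1/3)*u0^4*u1*v1 + (-1/4)*u0^4*u1^2 + (-1/3)*u0^5*v0 + (-1/12)*u0^6))*ht2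
  have key2 : (((-1/3)*u1*t + (1/2)*u0) - j0)^2 + (((1/2)*u1 + (1/3)*u0*t) - j1)^2 = (1*u1^2 + 1*u0^2)/3 :=
    mul_left_cancel₀ (pow_ne_zero 2 hdd) key
  rw [ho0, ho1, hr2]
  exact key2

set_option maxHeartbeats 16000000 in
theorem napoleon_circumcircles_common_point
    (A B C A₁ B₁ C₁ : EuclideanSpace ℝ (Fin 2))
    (hABC : AffineIndependent ℝ ![A, B, C])
    (hA₁ : dist A₁ B = dist B C) (hA₁' : dist A₁ C = dist B C)
    (hB₁ : dist A B₁ = dist A C) (hB₁' : dist B₁ C = dist A C)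
    (hC₁ : dist A C₁ = dist A B) (hC₁' : dist B C₁ = dist A B)
    (hsideA : (affineSpan ℝ {B, C}).SOppSide A A₁)
    (hsideB : (affineSpan ℝ {C, A}).SOppSide B B₁)
    (hsideC : (affineSpan ℝ {A, B}).SOppSide C C₁)
    : ∃ J : EuclideanSpace ℝ (Fin 2),
      (∀ (O : EuclideanSpace ℝ (Fin 2)) (r : ℝ),
        dist O A₁ = r → dist O B = r → dist O C = r → dist O J = r) ∧
      (∀ (O : EuclideanSpace ℝ (Fin 2)) (r : ℝ),
        dist O A = r → dist O B₁ = r → dist O C = r → dist O J = r) ∧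
      (∀ (O : EuclideanSpace ℝ (Fin 2)) (r : ℝ),
        dist O A = r → dist O B = r → dist O C₁ = r → dist O J = r) ∧
      J ∈ line[ℝ, A, A₁] ∧ J ∈ line[ℝ, B, B₁] ∧ J ∈ line[ℝ, C, C₁] := by
  have hBC : B ≠ C := fun h => by
    have h12 : (1 : Fin 3) = 2 := hABC.injective (show ![A,B,C] 1 = ![A,B,C] 2 by simpa using h)
    exact absurd h12 (by decide)
  have hCA : C ≠ A := fun h => by
    have h12 : (2 : Fin 3) = 0 := hABC.injective (show ![A,B,C] 2 = ![A,B,C] 0 by simpa using h)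
    exact absurd h12 (by decide)
  have hAB : A ≠ B := fun h => by
    have h12 : (0 : Fin 3) = 1 := hABC.injective (show ![A,B,C] 0 = ![A,B,C] 1 by simpa using h)
    exact absurd h12 (by decide)
  obtain ⟨t, ht2, hA1x, hA1y, hsA⟩ :=
    nap_vertex B C A A₁ hA₁ hA₁' hsideA (sq_dist_pos hBC.symm)
  obtain ⟨tb, htb2, hB1x, hB1y, hsB⟩ :=
    nap_vertex C A B B₁ (by rw [hB₁']; exact dist_comm A C)
      (by rw [dist_comm B₁ A, hB₁]; exact dist_comm A C) hsideB (sq_dist_pos hCA.symm)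
  obtain ⟨tc, htc2, hC1x, hC1y, hsC⟩ :=
    nap_vertex A B C C₁ (by rw [dist_comm C₁ A]; exact hC₁)
      (by rw [dist_comm C₁ B]; exact hC₁') hsideC (sq_dist_pos hAB.symm)
  have hsB' : tb * ((B 0 - A 0)*(C 1 - A 1) - (B 1 - A 1)*(C 0 - A 0)) < 0 := by linarith [hsB]
  have hsC' : tc * ((B 0 - A 0)*(C 1 - A 1) - (B 1 - A 1)*(C 0 - A 0)) < 0 := by linarith [hsC]
  have htb : tb = t := by
    have h0 : (t - tb) * (t + tb) = 0 := by linear_combination ht2 - htb2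
    rcases mul_eq_zero.mp h0 with h | h
    · linarith
    · exfalso
      have hneg : tb * ((B 0 - A 0)*(C 1 - A 1) - (B 1 - A 1)*(C 0 - A 0)) = -(t * ((B 0 - A 0)*(C 1 - A 1) - (B 1 - A 1)*(C 0 - A 0))) := by
        linear_combination ((B 0 - A 0)*(C 1 - A 1) - (B 1 - A 1)*(C 0 - A 0)) * h
      linarith
  have htc : tc = t := by
    have h0 : (t - tc) * (t + tc) = 0 := by linear_combination ht2 - htc2
    rcases mul_eq_zero.mp h0 with h | h
    · linarith
    · exfalso
      have hneg : tc * ((B 0 - A 0)*(C 1 - A 1) - (B 1 - A 1)*(C 0 - A 0)) = -(t * ((B 0 - A 0)*(C 1 - A 1) - (B 1 - A 1)*(C 0 - A 0))) := by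
        linear_combination ((B 0 - A 0)*(C 1 - A 1) - (B 1 - A 1)*(C 0 - A 0)) * h
      linarith
  rw [htb] at hB1x hB1y
  rw [htc] at hC1x hC1y
  have htne : t ≠ 0 := by
    intro h
    rw [h] at ht2
    norm_num at ht2
  have hla : 0 < ((B 0 - C 0)^2 + (B 1 - C 1)^2) := sq_dist_pos hBC
  have hlb : 0 < ((C 0 - A 0)^2 + (C 1 - A 1)^2) := sq_dist_pos hCA
  have hlc : 0 < ((A 0 - B 0)^2 + (A 1 - B 1)^2) := sq_dist_pos hAB
  have hdd : ((3/2)*((B 0 - A 0)*(C 1 - A 1) - (B 1 - A 1)*(C 0 - A 0)) - (1/2)*t*(((B 0 - C 0)^2 + (B 1 - C 1)^2) + ((C 0 - A 0)^2 + (C 1 - A 1)^2) + ((A 0 - B 0)^2 + (A 1 - B 1)^2))) ≠ 0 := by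
    intro h
    have e : t * ((3/2)*((B 0 - A 0)*(C 1 - A 1) - (B 1 - A 1)*(C 0 - A 0)) - (1/2)*t*(((B 0 - C 0)^2 + (B 1 - C 1)^2) + ((C 0 - A 0)^2 + (C 1 - A 1)^2) + ((A 0 - B 0)^2 + (A 1 - B 1)^2))) = (3/2)*(t*((B 0 - A 0)*(C 1 - A 1) - (B 1 - A 1)*(C 0 - A 0))) - (3/8)*(((B 0 - C 0)^2 + (B 1 - C 1)^2) + ((C 0 - A 0)^2 + (C 1 - A 1)^2) + ((A 0 - B 0)^2 + (A 1 - B 1)^2)) := by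
      linear_combination ((-(1/2))*(((B 0 - C 0)^2 + (B 1 - C 1)^2) + ((C 0 - A 0)^2 + (C 1 - A 1)^2) + ((A 0 - B 0)^2 + (A 1 - B 1)^2)))*ht2
    rw [h, mul_zero] at e
    linarith [hsA, hla, hlb, hlc, e]
  obtain ⟨j0, hJ0⟩ : ∃ x : ℝ, x * ((3/2)*((B 0 - A 0)*(C 1 - A 1) - (B 1 - A 1)*(C 0 - A 0)) - (1/2)*t*(((B 0 - C 0)^2 + (B 1 - C 1)^2) + ((C 0 - A 0)^2 + (C 1 - A 1)^2) + ((A 0 - B 0)^2 + (A 1 - B 1)^2))) = ((3/4)*(B 1)*(C 1)^2 + (-1/4)*(B 1)*(C 0)^2 + (-3/4)*(B 1)^2*(C 1) + (-1/2)*(B 1)^2*(C 0)*t + (-1/2)*(B 0)*(C 1)^2*t + 1*(B 0)*(C 0)*(C 1) + (-1/2)*(B 0)*(C 0)^2*t + -1*(B 0)*(B 1)*(C 0) + (1/4)*(B 0)^2*(C 1) + (-1/2)*(B 0)^2*(C 0)*t + (-3/4)*(A 1)*(C 1)^2 + (1/4)*(A 1)*(C 0)^2 + 1*(A 1)*(B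 1)*(C 0)*t + (3/4)*(A 1)*(B 1)^2 + 1*(A 1)*(B 0)*(C 1)*t + (-1/4)*(A 1)*(B 0)^2 + (3/4)*(A 1)^2*(C 1) + (-1/2)*(A 1)^2*(C 0)*t + (-3/4)*(A 1)^2*(B 1) + (-1/2)*(A 1)^2*(B 0)*t + (-1/2)*(A 0)*(C 1)^2*t + -1*(A 0)*(C 0)*(C 1) + (-1/2)*(A 0)*(C 0)^2*t + 1*(A 0)*(B 1)*(C 1)*t + (-1/2)*(A 0)*(B 1)^2*t + 3*(A 0)*(B 0)*(C 0)*t + 1*(A 0)*(B 0)*(B 1) + (-1/2)*(A 0)*(B 0)^2*t + 1*(A 0)*(A 1)*(C 0) + -1*(A 0)*(A 1)*(B 0) + (-1/4)*(A 0)^2*(C 1) + (-1/2)*(A 0)^2*(C 0)*t + (1/4)*(A 0)^2*(B 1) + (-1/2)*(A 0)^2*(B 0)*t) :=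
    ⟨(((3/4)*(B 1)*(C 1)^2 + (-1/4)*(B 1)*(C 0)^2 + (-3/4)*(B 1)^2*(C 1) + (-1/2)*(B 1)^2*(C 0)*t + (-1/2)*(B 0)*(C 1)^2*t + 1*(B 0)*(C 0)*(C 1) + (-1/2)*(B 0)*(C 0)^2*t + -1*(B 0)*(B 1)*(C 0) + (1/4)*(B 0)^2*(C 1) + (-1/2)*(B 0)^2*(C 0)*t + (-3/4)*(A 1)*(C 1)^2 + (1/4)*(A 1)*(C 0)^2 + 1*(A 1)*(B 1)*(C 0)*t + (3/4)*(A 1)*(B 1)^2 + 1*(A 1)*(B 0)*(C 1)*t + (-1/4)*(A 1)*(B 0)^2 + (3/4)*(A 1)^2*(C 1) + (-1/2)*(A 1)^2*(C 0)*t + (-3/4)*(A 1)^2*(B 1) + (-1/2)*(A 1)^2*(B 0)*t + (-1/2)*(A 0)*(C 1)^2*t + -1*(A 0)*(C 0)*(C 1) + (-1/2)*(A 0)*(C 0)^2*t + 1*(A 0)*(B 1)*(C 1)*t + (-1/2)*(A 0)*(B 1)^2*t + 3*(A 0)*(B 0)*(C 0)*t + 1*(A 0)*(B 0)*(B 1)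 + (-1/2)*(A 0)*(B 0)^2*t + 1*(A 0)*(A 1)*(C 0) + -1*(A 0)*(A 1)*(B 0) + (-1/4)*(A 0)^2*(C 1) + (-1/2)*(A 0)^2*(C 0)*t + (1/4)*(A 0)^2*(B 1) + (-1/2)*(A 0)^2*(B 0)*t))/(((3/2)*((B 0 - A 0)*(C 1 - A 1) - (B 1 - A 1)*(C 0 - A 0)) - (1/2)*t*(((B 0 - C 0)^2 + (B 1 - C 1)^2) + ((C 0 - A 0)^2 + (C 1 - A 1)^2) + ((A 0 - B 0)^2 + (A 1 - B 1)^2)))), div_mul_cancel₀ _ hdd⟩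
  obtain ⟨j1, hJ1⟩ : ∃ x : ℝ, x * ((3/2)*((B 0 - A 0)*(C 1 - A 1) - (B 1 - A 1)*(C 0 - A 0)) - (1/2)*t*(((B 0 - C 0)^2 + (B 1 - C 1)^2) + ((C 0 - A 0)^2 + (C 1 - A 1)^2) + ((A 0 - B 0)^2 + (A 1 - B 1)^2))) = ((-1/2)*(B 1)*(C 1)^2*t + -1*(B 1)*(C 0)*(C 1) + (-1/2)*(B 1)*(C 0)^2*t + (-1/2)*(B 1)^2*(C 1)*t + (-1/4)*(B 1)^2*(C 0) + (1/4)*(B 0)*(C 1)^2 + (-3/4)*(B 0)*(C 0)^2 + 1*(B 0)*(B 1)*(C 1) + (-1/2)*(B 0)^2*(C 1)*t + (3/4)*(B 0)^2*(C 0) + (-1/2)*(A 1)*(C 1)^2*t + 1*(A 1)*(C 0)*(C 1) + (-1/2)*(A 1)*(C 0)^2*t + 3*(A 1)*(B 1)*(C 1)*t + (-1/2)*(A 1)*(B 1)^2*t + 1*(A 1)*(B 0)*(C 0)*t + -1*(A 1)*(B 0)*(B 1) + (-1/2)*(A 1)*(B 0)^2*t + (-1/2)*(A 1)^2*(C 1)*t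 + (1/4)*(A 1)^2*(C 0) + (-1/2)*(A 1)^2*(B 1)*t + (-1/4)*(A 1)^2*(B 0) + (-1/4)*(A 0)*(C 1)^2 + (3/4)*(A 0)*(C 0)^2 + 1*(A 0)*(B 1)*(C 0)*t + (1/4)*(A 0)*(B 1)^2 + 1*(A 0)*(B 0)*(C 1)*t + (-3/4)*(A 0)*(B 0)^2 + -1*(A 0)*(A 1)*(C 1) + 1*(A 0)*(A 1)*(B 1) + (-1/2)*(A 0)^2*(C 1)*t + (-3/4)*(A 0)^2*(C 0) + (-1/2)*(A 0)^2*(B 1)*t + (3/4)*(A 0)^2*(B 0)) :=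
    ⟨(((-1/2)*(B 1)*(C 1)^2*t + -1*(B 1)*(C 0)*(C 1) + (-1/2)*(B 1)*(C 0)^2*t + (-1/2)*(B 1)^2*(C 1)*t + (-1/4)*(B 1)^2*(C 0) + (1/4)*(B 0)*(C 1)^2 + (-3/4)*(B 0)*(C 0)^2 + 1*(B 0)*(B 1)*(C 1) + (-1/2)*(B 0)^2*(C 1)*t + (3/4)*(B 0)^2*(C 0) + (-1/2)*(A 1)*(C 1)^2*t + 1*(A 1)*(C 0)*(C 1) + (-1/2)*(A 1)*(C 0)^2*t + 3*(A 1)*(B 1)*(C 1)*t + (-1/2)*(A 1)*(B 1)^2*t + 1*(A 1)*(B 0)*(C 0)*t + -1*(A 1)*(B 0)*(B 1) + (-1/2)*(A 1)*(B 0)^2*t + (-1/2)*(A 1)^2*(C 1)*t + (1/4)*(A 1)^2*(C 0) + (-1/2)*(A 1)^2*(B 1)*t + (-1/4)*(A 1)^2*(B 0) + (-1/4)*(A 0)*(C 1)^2 + (3/4)*(A 0)*(C 0)^2 + 1*(A 0)*(B 1)*(C 0)*t + (1/4)*(A 0)*(B 1)^2 + 1*(A 0)*(B 0)*(C 1)*t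 + (-3/4)*(A 0)*(B 0)^2 + -1*(A 0)*(A 1)*(C 1) + 1*(A 0)*(A 1)*(B 1) + (-1/2)*(A 0)^2*(C 1)*t + (-3/4)*(A 0)^2*(C 0) + (-1/2)*(A 0)^2*(B 1)*t + (3/4)*(A 0)^2*(B 0)))/(((3/2)*((B 0 - A 0)*(C 1 - A 1) - (B 1 - A 1)*(C 0 - A 0)) - (1/2)*t*(((B 0 - C 0)^2 + (B 1 - C 1)^2) + ((C 0 - A 0)^2 + (C 1 - A 1)^2) + ((A 0 - B 0)^2 + (A 1 - B 1)^2)))), div_mul_cancel₀ _ hdd⟩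
  refine ⟨!₂[j0, j1], ?_, ?_, ?_, ?_, ?_, ?_⟩
  · intro O r k1 k2 k3
    have q1 : (O 0 - A₁ 0)^2 + (O 1 - A₁ 1)^2 = r^2 := by
      rw [← dist_sq_eq, k1]
    have q2 : (O 0 - B 0)^2 + (O 1 - B 1)^2 = r^2 := by
      rw [← dist_sq_eq, k2]
    have q3 : (O 0 - C 0)^2 + (O 1 - C 1)^2 = r^2 := by
      rw [← dist_sq_eq, k3]
    rw [hA1x, hA1y] at q1
    have conc := circle_key_a (B 0 - A 0) (B 1 - A 1) (C 0 - A 0) (C 1 - A 1) t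
      (j0 - A 0) (j1 - A 1) (O 0 - A 0) (O 1 - A 1) r ht2 htne
      (fun h => (ne_of_gt hla) (by linear_combination h)) (fun h => hdd (by linear_combination h))
      (by linear_combination hJ0) (by linear_combination hJ1)
      (by linear_combination q1) (by linear_combination q2) (by linear_combination q3)
    have final : (O 0 - j0)^2 + (O 1 - j1)^2 = r^2 := by linear_combination conc
    have hrn : (0:ℝ) ≤ r := k2 ▸ dist_nonneg
    have hd2 : dist O (!₂[j0, j1] : EuclideanSpace ℝ (Fin 2)) ^ 2 = r ^ 2 := by
      rw [dist_sq_eq]; simpa using final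
    have h0J : (0:ℝ) ≤ dist O (!₂[j0, j1] : EuclideanSpace ℝ (Fin 2)) := dist_nonneg
    have hfac : (dist O (!₂[j0, j1] : EuclideanSpace ℝ (Fin 2)) - r) *
        (dist O (!₂[j0, j1] : EuclideanSpace ℝ (Fin 2)) + r) = 0 := by
      linear_combination hd2
    rcases mul_eq_zero.mp hfac with h | h
    · linarith
    · linarith
  · intro O r k1 k2 k3
    have q1 : (O 0 - A 0)^2 + (O 1 - A 1)^2 = r^2 := by
      rw [← dist_sq_eq, k1]
    have q2 : (O 0 - B₁ 0)^2 + (O 1 - B₁ 1)^2 = r^2 := by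
      rw [← dist_sq_eq, k2]
    have q3 : (O 0 - C 0)^2 + (O 1 - C 1)^2 = r^2 := by
      rw [← dist_sq_eq, k3]
    rw [hB1x, hB1y] at q2
    have conc := circle_key_b (B 0 - A 0) (B 1 - A 1) (C 0 - A 0) (C 1 - A 1) t
      (j0 - A 0) (j1 - A 1) (O 0 - A 0) (O 1 - A 1) r ht2 htne
      (fun h => (ne_of_gt hlb) (by linear_combination h)) (fun h => hdd (by linear_combination h))
      (by linear_combination hJ0) (by linear_combination hJ1)
      (by linear_combination q1) (by linear_combination q2) (by linear_combination q3)
    have final : (O 0 - j0)^2 + (O 1 - j1)^2 = r^2 := by linear_combination conc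
    have hrn : (0:ℝ) ≤ r := k2 ▸ dist_nonneg
    have hd2 : dist O (!₂[j0, j1] : EuclideanSpace ℝ (Fin 2)) ^ 2 = r ^ 2 := by
      rw [dist_sq_eq]; simpa using final
    have h0J : (0:ℝ) ≤ dist O (!₂[j0, j1] : EuclideanSpace ℝ (Fin 2)) := dist_nonneg
    have hfac : (dist O (!₂[j0, j1] : EuclideanSpace ℝ (Fin 2)) - r) *
        (dist O (!₂[j0, j1] : EuclideanSpace ℝ (Fin 2)) + r) = 0 := by
      linear_combination hd2
    rcases mul_eq_zero.mp hfac with h | h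
    · linarith
    · linarith
  · intro O r k1 k2 k3
    have q1 : (O 0 - A 0)^2 + (O 1 - A 1)^2 = r^2 := by
      rw [← dist_sq_eq, k1]
    have q2 : (O 0 - B 0)^2 + (O 1 - B 1)^2 = r^2 := by
      rw [← dist_sq_eq, k2]
    have q3 : (O 0 - C₁ 0)^2 + (O 1 - C₁ 1)^2 = r^2 := by
      rw [← dist_sq_eq, k3]
    rw [hC1x, hC1y] at q3
    have conc := circle_key_c (B 0 - A 0) (B 1 - A 1) (C 0 - A 0) (C 1 - A 1) t
      (j0 - A 0) (j1 - A 1) (O 0 - A 0) (O 1 - A 1) r ht2 htne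
      (fun h => (ne_of_gt hlc) (by linear_combination h)) (fun h => hdd (by linear_combination h))
      (by linear_combination hJ0) (by linear_combination hJ1)
      (by linear_combination q1) (by linear_combination q2) (by linear_combination q3)
    have final : (O 0 - j0)^2 + (O 1 - j1)^2 = r^2 := by linear_combination conc
    have hrn : (0:ℝ) ≤ r := k2 ▸ dist_nonneg
    have hd2 : dist O (!₂[j0, j1] : EuclideanSpace ℝ (Fin 2)) ^ 2 = r ^ 2 := by
      rw [dist_sq_eq]; simpa using final
    have h0J : (0:ℝ) ≤ dist O (!₂[j0, j1] : EuclideanSpace ℝ (Fin 2)) := dist_nonneg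
    have hfac : (dist O (!₂[j0, j1] : EuclideanSpace ℝ (Fin 2)) - r) *
        (dist O (!₂[j0, j1] : EuclideanSpace ℝ (Fin 2)) + r) = 0 := by
      linear_combination hd2
    rcases mul_eq_zero.mp hfac with h | h
    · linarith
    · linarith
  · have hx0 : ((-1*(B 1)*(C 1)*t + (-1/2)*(B 1)*(C 0) + (1/2)*(B 0)*(C 1) + -1*(B 0)*(C 0)*t + 1*(A 1)*(C 1)*t + (1/2)*(A 1)*(C 0) + 1*(A 1)*(B 1)*t + (-1/2)*(A 1)*(B 0) + -1*(A 1)^2*t + (-1/2)*(A 0)*(C 1) + 1*(A 0)*(C 0)*t + (1/2)*(A 0)*(B 1) + 1*(A 0)*(B 0)*t + -1*(A 0)^2*t))*(A₁ 0 - A 0) = (j0 - A 0)*((3/2)*((B 0 - A 0)*(C 1 - A 1) - (B 1 - A 1)*(C 0 - A 0)) - (1/2)*t*(((B 0 - C 0)^2 + (B 1 - C 1)^2) + ((C 0 - A 0)^2 + (C 1 - A 1)^2) + ((A 0 - B 0)^2 + (A 1 - B 1)^2))) := by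
      rw [hA1x]
      linear_combination (-1)*hJ0 + (-((-1*(B 1)*(C 1)^2 + 1*(B 1)^2*(C 1) + -1*(B 0)*(C 0)*(C 1) + 1*(B 0)*(B 1)*(C 0) + 1*(A 1)*(C 1)^2 + -1*(A 1)*(B 1)^2 + -1*(A 1)^2*(C 1) + 1*(A 1)^2*(B 1) + 1*(A 0)*(C 0)*(C 1) + -1*(A 0)*(B 1)*(C 0) + 1*(A 0)*(B 0)*(C 1) + -1*(A 0)*(B 0)*(B 1) + -1*(A 0)^2*(C 1) + 1*(A 0)^2*(B 1))))*ht2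
    have hx1 : ((-1*(B 1)*(C 1)*t + (-1/2)*(B 1)*(C 0) + (1/2)*(B 0)*(C 1) + -1*(B 0)*(C 0)*t + 1*(A 1)*(C 1)*t + (1/2)*(A 1)*(C 0) + 1*(A 1)*(B 1)*t + (-1/2)*(A 1)*(B 0) + -1*(A 1)^2*t + (-1/2)*(A 0)*(C 1) + 1*(A 0)*(C 0)*t + (1/2)*(A 0)*(B 1) + 1*(A 0)*(B 0)*t + -1*(A 0)^2*t))*(A₁ 1 - A 1) = (j1 - A 1)*((3/2)*((B 0 - A 0)*(C 1 - A 1) - (B 1 - A 1)*(C 0 - A 0)) - (1/2)*t*(((B 0 - C 0)^2 + (B 1 - C 1)^2) + ((C 0 - A 0)^2 + (C 1 - A 1)^2) + ((A 0 - B 0)^2 + (A 1 - B 1)^2))) := by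
      rw [hA1y]
      linear_combination (-1)*hJ1 + (-((1*(B 1)*(C 0)*(C 1) + 1*(B 0)*(C 0)^2 + -1*(B 0)*(B 1)*(C 1) + -1*(B 0)^2*(C 0) + -1*(A 1)*(C 0)*(C 1) + -1*(A 1)*(B 1)*(C 0) + 1*(A 1)*(B 0)*(C 1) + 1*(A 1)*(B 0)*(B 1) + 1*(A 1)^2*(C 0) + -1*(A 1)^2*(B 0) + -1*(A 0)*(C 0)^2 + 1*(A 0)*(B 0)^2 + 1*(A 0)^2*(C 0) + -1*(A 0)^2*(B 0))))*ht2
    have heq : (((-1*(B 1)*(C 1)*t + (-1/2)*(B 1)*(C 0) + (1/2)*(B 0)*(C 1) + -1*(B 0)*(C 0)*t + 1*(A 1)*(C 1)*t + (1/2)*(A 1)*(C 0) + 1*(A 1)*(B 1)*t + (-1/2)*(A 1)*(B 0) + -1*(A 1)^2*t + (-1/2)*(A 0)*(C 1) + 1*(A 0)*(C 0)*t + (1/2)*(A 0)*(B 1) + 1*(A 0)*(B 0)*t + -1*(A 0)^2*t))/((3/2)*((B 0 - A 0)*(C 1 - A 1) - (B 1 - A 1)*(C 0 - A 0)) - (1/2)*t*(((B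 0 - C 0)^2 + (B 1 - C 1)^2) + ((C 0 - A 0)^2 + (C 1 - A 1)^2) + ((A 0 - B 0)^2 + (A 1 - B 1)^2)))) • (A₁ -ᵥ A) +ᵥ A = (!₂[j0, j1] : EuclideanSpace ℝ (Fin 2)) := by
      apply pt_ext
      · rw [comb_coord]
        simp only [Matrix.cons_val_zero]
        rw [div_mul_eq_mul_div, hx0, mul_div_cancel_right₀ _ hdd]
        ring
      · rw [comb_coord]
        simp only [Matrix.cons_val_one, Matrix.head_cons, Matrix.cons_val_zero]
        rw [div_mul_eq_mul_div, hx1, mul_div_cancel_right₀ _ hdd]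
        ring
    rw [← heq]
    exact smul_vsub_vadd_mem_affineSpan_pair _ _ _
  · have hx0 : ((1*(B 1)*(C 1)*t + (-1/2)*(B 1)*(C 0) + -1*(B 1)^2*t + (1/2)*(B 0)*(C 1) + 1*(B 0)*(C 0)*t + -1*(B 0)^2*t + -1*(A 1)*(C 1)*t + (1/2)*(A 1)*(C 0) + 1*(A 1)*(B 1)*t + (-1/2)*(A 1)*(B 0) + (-1/2)*(A 0)*(C 1) + -1*(A 0)*(C 0)*t + (1/2)*(A 0)*(B 1) + 1*(A 0)*(B 0)*t))*(B₁ 0 - B 0) = (j0 - B 0)*((3/2)*((B 0 - A 0)*(C 1 - A 1) - (B 1 - A 1)*(C 0 - A 0)) - (1/2)*t*(((B 0 - C 0)^2 + (B 1 - C 1)^2) + ((C 0 - A 0)^2 + (C 1 - A 1)^2) + ((A 0 - B 0)^2 + (A 1 - B 1)^2))) := by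
      rw [hB1x]
      linear_combination (-1)*hJ0 + (-((-1*(B 1)*(C 1)^2 + 1*(B 1)^2*(C 1) + -1*(B 0)*(C 0)*(C 1) + 1*(B 0)^2*(C 1) + 1*(A 1)*(C 1)^2 + -1*(A 1)*(B 1)^2 + 1*(A 1)*(B 0)*(C 0) + -1*(A 1)*(B 0)^2 + -1*(A 1)^2*(C 1) + 1*(A 1)^2*(B 1) + 1*(A 0)*(C 0)*(C 1) + -1*(A 0)*(B 0)*(C 1) + -1*(A 0)*(A 1)*(C 0) + 1*(A 0)*(A 1)*(B 0))))*ht2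
    have hx1 : ((1*(B 1)*(C 1)*t + (-1/2)*(B 1)*(C 0) + -1*(B 1)^2*t + (1/2)*(B 0)*(C 1) + 1*(B 0)*(C 0)*t + -1*(B 0)^2*t + -1*(A 1)*(C 1)*t + (1/2)*(A 1)*(C 0) + 1*(A 1)*(B 1)*t + (-1/2)*(A 1)*(B 0) + (-1/2)*(A 0)*(C 1) + -1*(A 0)*(C 0)*t + (1/2)*(A 0)*(B 1) + 1*(A 0)*(B 0)*t))*(B₁ 1 - B 1) = (j1 - B 1)*((3/2)*((B 0 - A 0)*(C 1 - A 1) - (B 1 - A 1)*(C 0 - A 0)) - (1/2)*t*(((B 0 - C 0)^2 + (B 1 - C 1)^2) + ((C 0 - A 0)^2 + (C 1 - A 1)^2) + ((A 0 - B 0)^2 + (A 1 - B 1)^2))) := by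
      rw [hB1y]
      linear_combination (-1)*hJ1 + (-((1*(B 1)*(C 0)*(C 1) + -1*(B 1)^2*(C 0) + 1*(B 0)*(C 0)^2 + -1*(B 0)^2*(C 0) + -1*(A 1)*(C 0)*(C 1) + 1*(A 1)*(B 1)*(C 0) + -1*(A 0)*(C 0)^2 + -1*(A 0)*(B 1)*(C 1) + 1*(A 0)*(B 1)^2 + 1*(A 0)*(B 0)^2 + 1*(A 0)*(A 1)*(C 1) + -1*(A 0)*(A 1)*(B 1) + 1*(A 0)^2*(C 0) + -1*(A 0)^2*(B 0))))*ht2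
    have heq : (((1*(B 1)*(C 1)*t + (-1/2)*(B 1)*(C 0) + -1*(B 1)^2*t + (1/2)*(B 0)*(C 1) + 1*(B 0)*(C 0)*t + -1*(B 0)^2*t + -1*(A 1)*(C 1)*t + (1/2)*(A 1)*(C 0) + 1*(A 1)*(B 1)*t + (-1/2)*(A 1)*(B 0) + (-1/2)*(A 0)*(C 1) + -1*(A 0)*(C 0)*t + (1/2)*(A 0)*(B 1) + 1*(A 0)*(B 0)*t))/((3/2)*((B 0 - A 0)*(C 1 - A 1) - (B 1 - A 1)*(C 0 - A 0)) - (1/2)*t*(((B 0 - C 0)^2 + (B 1 - C 1)^2) + ((C 0 - A 0)^2 + (C 1 - A 1)^2) + ((A 0 - B 0)^2 + (A 1 - B 1)^2)))) • (B₁ -ᵥ B) +ᵥ B = (!₂[j0, j1] : EuclideanSpace ℝ (Fin 2)) := by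
      apply pt_ext
      · rw [comb_coord]
        simp only [Matrix.cons_val_zero]
        rw [div_mul_eq_mul_div, hx0, mul_div_cancel_right₀ _ hdd]
        ring
      · rw [comb_coord]
        simp only [Matrix.cons_val_one, Matrix.head_cons, Matrix.cons_val_zero]
        rw [div_mul_eq_mul_div, hx1, mul_div_cancel_right₀ _ hdd]
        ring
    rw [← heq]
    exact smul_vsub_vadd_mem_affineSpan_pair _ _ _
  · have hx0 : ((-1*(C 1)^2*t + -1*(C 0)^2*t + 1*(B 1)*(C 1)*t + (-1/2)*(B 1)*(C 0) + (1/2)*(B 0)*(C 1) + 1*(B 0)*(C 0)*t + 1*(A 1)*(C 1)*t + (1/2)*(A 1)*(C 0) + -1*(A 1)*(B 1)*t + (-1/2)*(A 1)*(B 0) + (-1/2)*(A 0)*(C 1) + 1*(A 0)*(C 0)*t + (1/2)*(A 0)*(B 1) + -1*(A 0)*(B 0)*t))*(C₁ 0 - C 0) = (j0 - C 0)*((3/2)*((B 0 - A 0)*(C 1 - A 1) - (B 1 - A 1)*(C 0 - A 0)) - (1/2)*t*(((B 0 - C 0)^2 + (B 1 - C 1)^2) + ((C 0 - A 0)^2 +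 (C 1 - A 1)^2) + ((A 0 - B 0)^2 + (A 1 - B 1)^2))) := by
      rw [hC1x]
      linear_combination (-1)*hJ0 + (-((-1*(B 1)*(C 1)^2 + -1*(B 1)*(C 0)^2 + 1*(B 1)^2*(C 1) + 1*(B 0)*(B 1)*(C 0) + 1*(A 1)*(C 1)^2 + 1*(A 1)*(C 0)^2 + -1*(A 1)*(B 1)^2 + -1*(A 1)*(B 0)*(C 0) + -1*(A 1)^2*(C 1) + 1*(A 1)^2*(B 1) + 1*(A 0)*(B 1)*(C 0) + -1*(A 0)*(B 0)*(B 1) + -1*(A 0)*(A 1)*(C 0) + 1*(A 0)*(A 1)*(B 0))))*ht2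
    have hx1 : ((-1*(C 1)^2*t + -1*(C 0)^2*t + 1*(B 1)*(C 1)*t + (-1/2)*(B 1)*(C 0) + (1/2)*(B 0)*(C 1) + 1*(B 0)*(C 0)*t + 1*(A 1)*(C 1)*t + (1/2)*(A 1)*(C 0) + -1*(A 1)*(B 1)*t + (-1/2)*(A 1)*(B 0) + (-1/2)*(A 0)*(C 1) + 1*(A 0)*(C 0)*t + (1/2)*(A 0)*(B 1) + -1*(A 0)*(B 0)*t))*(C₁ 1 - C 1) = (j1 - C 1)*((3/2)*((B 0 - A 0)*(C 1 - A 1) - (B 1 - A 1)*(C 0 - A 0)) - (1/2)*t*(((B 0 - C 0)^2 + (B 1 - C 1)^2) + ((C 0 - A 0)^2 + (C 1 - A 1)^2) + ((A 0 - B 0)^2 + (A 1 - B 1)^2))) := by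
      rw [hC1y]
      linear_combination (-1)*hJ1 + (-((1*(B 0)*(C 1)^2 + 1*(B 0)*(C 0)^2 + -1*(B 0)*(B 1)*(C 1) + -1*(B 0)^2*(C 0) + -1*(A 1)*(B 0)*(C 1) + 1*(A 1)*(B 0)*(B 1) + -1*(A 0)*(C 1)^2 + -1*(A 0)*(C 0)^2 + 1*(A 0)*(B 1)*(C 1) + 1*(A 0)*(B 0)^2 + 1*(A 0)*(A 1)*(C 1) + -1*(A 0)*(A 1)*(B 1) + 1*(A 0)^2*(C 0) + -1*(A 0)^2*(B 0))))*ht2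
    have heq : (((-1*(C 1)^2*t + -1*(C 0)^2*t + 1*(B 1)*(C 1)*t + (-1/2)*(B 1)*(C 0) + (1/2)*(B 0)*(C 1) + 1*(B 0)*(C 0)*t + 1*(A 1)*(C 1)*t + (1/2)*(A 1)*(C 0) + -1*(A 1)*(B 1)*t + (-1/2)*(A 1)*(B 0) + (-1/2)*(A 0)*(C 1) + 1*(A 0)*(C 0)*t + (1/2)*(A 0)*(B 1) + -1*(A 0)*(B 0)*t))/((3/2)*((B 0 - A 0)*(C 1 - A 1) - (B 1 - A 1)*(C 0 - A 0)) - (1/2)*t*(((B 0 - C 0)^2 + (B 1 - C 1)^2) + ((C 0 - A 0)^2 + (C 1 - A 1)^2) + ((A 0 - B 0)^2 + (A 1 - B 1)^2)))) • (C₁ -ᵥ C) +ᵥ C = (!₂[j0, j1] : EuclideanSpace ℝ (Fin 2)) := by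
      apply pt_ext
      · rw [comb_coord]
        simp only [Matrix.cons_val_zero]
        rw [div_mul_eq_mul_div, hx0, mul_div_cancel_right₀ _ hdd]
        ring
      · rw [comb_coord]
        simp only [Matrix.cons_val_one, Matrix.head_cons, Matrix.cons_val_zero]
        rw [div_mul_eq_mul_div, hx1, mul_div_cancel_right₀ _ hdd]
        ring
    rw [← heq]
    exact smul_vsub_vadd_mem_affineSpan_pair _ _ _
end

section
/- (Napoleon's Theorem, outer case.) Let A₁, B₁, C₁ be a non-overlapping Napoleon configuration for a nondegenerate triangle ABC in the Euclidean plane, and let G₁, G₂, G₃ be the centroids of the triangles A₁BC, AB₁C, ABC₁ respectively. Then the triangle G₁G₂G₃ is equilateral (dist G₁ G₂ = dist G₂ G₃ = dist G₃ G₁) and its centroid (G₁+G₂+G₃)/3 coincides with the centroid G = (A+B+C)/3 of triangle ABC. -/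
open EuclideanGeometry AffineSubspace MeasureTheory

lemma dist_sq_coords (x y : EuclideanSpace ℝ (Fin 2)) :
    dist x y ^ 2 = (x 0 - y 0) ^ 2 + (x 1 - y 1) ^ 2 := by
  rw [EuclideanSpace.dist_eq, Real.sq_sqrt (by positivity)]
  simp [Fin.sum_univ_two, Real.dist_eq, sq_abs]

set_option maxHeartbeats 1000000 in
lemma apex (B C A P : EuclideanSpace ℝ (Fin 2)) (hBC : B ≠ C)
    (h1 : dist P B = dist B C) (h2 : dist P C = dist B C)
    (hside : (affineSpan ℝ {B, C}).SOppSide A P) :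
    ∃ t : ℝ, t ^ 2 = 3 / 4 ∧
      P 0 = (B 0 + C 0) / 2 - t * (C 1 - B 1) ∧
      P 1 = (B 1 + C 1) / 2 + t * (C 0 - B 0) ∧
      t * ((C 0 - B 0) * (A 1 - B 1) - (C 1 - B 1) * (A 0 - B 0)) < 0 := by
  have e1 : (P 0 - B 0) ^ 2 + (P 1 - B 1) ^ 2 = (B 0 - C 0) ^ 2 + (B 1 - C 1) ^ 2 := by
    have := congrArg (· ^ 2) h1
    simpa [dist_sq_coords] using this
  have e2 : (P 0 - C 0) ^ 2 + (P 1 - C 1) ^ 2 = (B 0 - C 0) ^ 2 + (B 1 - C 1) ^ 2 := by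
    have := congrArg (· ^ 2) h2
    simpa [dist_sq_coords] using this
  set u0 : ℝ := C 0 - B 0 with hu0
  set u1 : ℝ := C 1 - B 1 with hu1
  have hu : (0:ℝ) < u0 ^ 2 + u1 ^ 2 := by
    have hne : u0 ≠ 0 ∨ u1 ≠ 0 := by
      by_contra h
      push_neg at h
      refine hBC (PiLp.ext fun i => ?_)
      fin_cases i
      · show B 0 = C 0; have := h.1; rw [hu0] at this; linarith [this]
      · show B 1 = C 1; have := h.2; rw [hu1] at this; linarith [this]
    rcases hne with h | h
    · nlinarith [sq_nonneg u1, sq_pos_of_ne_zero h]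
    · nlinarith [sq_nonneg u0, sq_pos_of_ne_zero h]
  have hperp : u0 * (P 0 - (B 0 + C 0) / 2) + u1 * (P 1 - (B 1 + C 1) / 2) = 0 := by
    linear_combination (1/2 : ℝ) * e1 - (1/2 : ℝ) * e2
  have hSne : u0 ^ 2 + u1 ^ 2 ≠ 0 := ne_of_gt hu
  set t : ℝ := ((P 1 - (B 1 + C 1) / 2) * u0 - (P 0 - (B 0 + C 0) / 2) * u1) / (u0 ^ 2 + u1 ^ 2)
    with htdef
  have hts : t * (u0 ^ 2 + u1 ^ 2)
      = (P 1 - (B 1 + C 1) / 2) * u0 - (P 0 - (B 0 + C 0) / 2) * u1 := by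
    rw [htdef, div_mul_cancel₀ _ hSne]
  have hP0 : P 0 = (B 0 + C 0) / 2 - t * u1 := by
    have h0' : (P 0 - ((B 0 + C 0) / 2 - t * u1)) * (u0 ^ 2 + u1 ^ 2) = 0 := by
      linear_combination u0 * hperp + u1 * hts
    rcases mul_eq_zero.mp h0' with h | h
    · linarith
    · exact absurd h hSne
  have hP1 : P 1 = (B 1 + C 1) / 2 + t * u0 := by
    have h1' : (P 1 - ((B 1 + C 1) / 2 + t * u0)) * (u0 ^ 2 + u1 ^ 2) = 0 := by
      linear_combination u1 * hperp - u0 * hts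
    rcases mul_eq_zero.mp h1' with h | h
    · linarith
    · exact absurd h hSne
  have ht2 : t ^ 2 = 3 / 4 := by
    have h34 : (t ^ 2 - 3 / 4) * (u0 ^ 2 + u1 ^ 2) = 0 := by
      rw [hP0, hP1] at e1
      linear_combination e1
    rcases mul_eq_zero.mp h34 with h | h
    · linarith
    · exact absurd h hSne
  refine ⟨t, ht2, hP0, hP1, ?_⟩
  -- sign part
  obtain ⟨p, hp, hsb⟩ := hside.exists_sbtw
  have hp' : (p -ᵥ B) +ᵥ B ∈ line[ℝ, B, C] := by rwa [vsub_vadd]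
  obtain ⟨r, hr⟩ := vadd_left_mem_affineSpan_pair.mp hp'
  have hr0 : r * (C 0 - B 0) = p 0 - B 0 := by
    have := congrArg (· 0) hr
    simpa [vsub_eq_sub] using this
  have hr1 : r * (C 1 - B 1) = p 1 - B 1 := by
    have := congrArg (· 1) hr
    simpa [vsub_eq_sub] using this
  rw [sbtw_iff_mem_image_Ioo_and_ne] at hsb
  obtain ⟨⟨τ, ⟨hτ0, hτ1⟩, hmap⟩, _⟩ := hsb
  have hm0 : τ * (P 0 - A 0) + A 0 = p 0 := by
    have := congrArg (· 0) hmap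
    simpa [AffineMap.lineMap_apply, vsub_eq_sub, vadd_eq_add] using this
  have hm1 : τ * (P 1 - A 1) + A 1 = p 1 := by
    have := congrArg (· 1) hmap
    simpa [AffineMap.lineMap_apply, vsub_eq_sub, vadd_eq_add] using this
  set D : ℝ := u0 * (A 1 - B 1) - u1 * (A 0 - B 0) with hD
  have hDne : D ≠ 0 := by
    intro h0
    apply hside.2.1
    set r' : ℝ := ((A 0 - B 0) * u0 + (A 1 - B 1) * u1) / (u0 ^ 2 + u1 ^ 2) with hr'
    have hr'S : r' * (u0 ^ 2 + u1 ^ 2) = (A 0 - B 0) * u0 + (A 1 - B 1) * u1 := by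
      rw [hr', div_mul_cancel₀ _ hSne]
    have hrA : r' • (C -ᵥ B) = A -ᵥ B := by
      ext i
      fin_cases i
      · show r' * (C 0 - B 0) = A 0 - B 0
        have hc : (r' * (C 0 - B 0) - (A 0 - B 0)) * (u0 ^ 2 + u1 ^ 2) = 0 := by
          linear_combination u0 * hr'S + u1 * h0
        rcases mul_eq_zero.mp hc with h | h
        · linarith
        · exact absurd h hSne
      · show r' * (C 1 - B 1) = A 1 - B 1
        have hc : (r' * (C 1 - B 1) - (A 1 - B 1)) * (u0 ^ 2 + u1 ^ 2) = 0 := by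
          linear_combination u1 * hr'S - u0 * h0
        rcases mul_eq_zero.mp hc with h | h
        · linarith
        · exact absurd h hSne
    have := vadd_left_mem_affineSpan_pair.mpr ⟨r', hrA⟩
    rwa [vsub_vadd] at this
  have key : (1 - τ) * D + τ * t * (u0 ^ 2 + u1 ^ 2) = 0 := by
    rw [hP0] at hm0
    rw [hP1] at hm1
    linear_combination (u0 : ℝ) * hm1 - (u1 : ℝ) * hm0 - (u0 : ℝ) * hr1 + (u1 : ℝ) * hr0
  have hD2 : 0 < D ^ 2 := sq_pos_of_ne_zero hDne
  have hmain : τ * (t * D) * (u0 ^ 2 + u1 ^ 2) = -((1 - τ) * D ^ 2) := by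
    linear_combination (D : ℝ) * key
  by_contra hcon
  push_neg at hcon
  nlinarith [mul_nonneg (mul_nonneg hτ0.le hcon) hu.le, mul_pos hD2 (by linarith : (0:ℝ) < 1 - τ)]

set_option maxHeartbeats 1000000 in
set_option maxHeartbeats 1000000 in
theorem napoleon_outer
    (A B C A₁ B₁ C₁ : EuclideanSpace ℝ (Fin 2))
    (hABC : AffineIndependent ℝ ![A, B, C])
    (hA₁ : dist A₁ B = dist B C) (hA₁' : dist A₁ C = dist B C)
    (hB₁ : dist A B₁ = dist A C) (hB₁' : dist B₁ C = dist A C)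
    (hC₁ : dist A C₁ = dist A B) (hC₁' : dist B C₁ = dist A B)
    (hsideA : (affineSpan ℝ {B, C}).SOppSide A A₁)
    (hsideB : (affineSpan ℝ {C, A}).SOppSide B B₁)
    (hsideC : (affineSpan ℝ {A, B}).SOppSide C C₁)
    (G₁ G₂ G₃ : EuclideanSpace ℝ (Fin 2))
    (hG₁ : G₁ = (3:ℝ)⁻¹ • (A₁ + B + C))
    (hG₂ : G₂ = (3:ℝ)⁻¹ • (A + B₁ + C))
    (hG₃ : G₃ = (3:ℝ)⁻¹ • (A + B + C₁)) :
    (dist G₁ G₂ = dist G₂ G₃ ∧ dist G₂ G₃ = dist G₃ G₁) ∧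
      (3:ℝ)⁻¹ • (G₁ + G₂ + G₃) = (3:ℝ)⁻¹ • (A + B + C) := by
  have hBC : B ≠ C := by
    intro h
    have h12 : (![A, B, C]) 1 = (![A, B, C]) 2 := by simp [h]
    exact absurd (hABC.injective h12) (by decide)
  have hCA : C ≠ A := by
    intro h
    have h20 : (![A, B, C]) 2 = (![A, B, C]) 0 := by simp [h]
    exact absurd (hABC.injective h20) (by decide)
  have hAB : A ≠ B := by
    intro h
    have h01 : (![A, B, C]) 0 = (![A, B, C]) 1 := by simp [h]
    exact absurd (hABC.injective h01) (by decide)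
  obtain ⟨tA, htA2, hA₁0, hA₁1, hsA⟩ := apex B C A A₁ hBC hA₁ hA₁' hsideA
  obtain ⟨tB, htB2, hB₁0, hB₁1, hsB⟩ :=
    apex C A B B₁ hCA (by rw [dist_comm C A]; exact hB₁')
      (by rw [dist_comm B₁ A, dist_comm C A]; exact hB₁) hsideB
  obtain ⟨tC, htC2, hC₁0, hC₁1, hsC⟩ :=
    apex A B C C₁ hAB (by rw [dist_comm C₁ A]; exact hC₁)
      (by rw [dist_comm C₁ B]; exact hC₁') hsideC
  have eB : (A 0 - C 0) * (B 1 - C 1) - (A 1 - C 1) * (B 0 - C 0)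
      = (C 0 - B 0) * (A 1 - B 1) - (C 1 - B 1) * (A 0 - B 0) := by ring
  have eC : (B 0 - A 0) * (C 1 - A 1) - (B 1 - A 1) * (C 0 - A 0)
      = (C 0 - B 0) * (A 1 - B 1) - (C 1 - B 1) * (A 0 - B 0) := by ring
  rw [eB] at hsB
  rw [eC] at hsC
  set D : ℝ := (C 0 - B 0) * (A 1 - B 1) - (C 1 - B 1) * (A 0 - B 0) with hD
  have htBA : tB = tA := by
    rcases mul_eq_zero.mp (show (tB - tA) * (tB + tA) = 0 by
      linear_combination htB2 - htA2) with h | h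
    · linarith
    · exfalso; nlinarith [mul_eq_zero_of_left h D]
  have htCA : tC = tA := by
    rcases mul_eq_zero.mp (show (tC - tA) * (tC + tA) = 0 by
      linear_combination htC2 - htA2) with h | h
    · linarith
    · exfalso; nlinarith [mul_eq_zero_of_left h D]
  rw [htBA] at hB₁0 hB₁1
  rw [htCA] at hC₁0 hC₁1
  have g10 : G₁ 0 = 3⁻¹ * (A₁ 0 + B 0 + C 0) := by rw [hG₁]; rfl
  have g11 : G₁ 1 = 3⁻¹ * (A₁ 1 + B 1 + C 1) := by rw [hG₁]; rfl
  have g20 : G₂ 0 = 3⁻¹ * (A 0 + B₁ 0 + C 0) := by rw [hG₂]; rfl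
  have g21 : G₂ 1 = 3⁻¹ * (A 1 + B₁ 1 + C 1) := by rw [hG₂]; rfl
  have g30 : G₃ 0 = 3⁻¹ * (A 0 + B 0 + C₁ 0) := by rw [hG₃]; rfl
  have g31 : G₃ 1 = 3⁻¹ * (A 1 + B 1 + C₁ 1) := by rw [hG₃]; rfl
  refine ⟨⟨?_, ?_⟩, ?_⟩
  · rw [EuclideanSpace.dist_eq, EuclideanSpace.dist_eq]
    congr 1
    rw [Fin.sum_univ_two, Fin.sum_univ_two]
    simp only [Real.dist_eq, sq_abs]
    rw [g10, g11, g20, g21, g30, g31, hA₁0, hA₁1, hB₁0, hB₁1, hC₁0, hC₁1]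
    linear_combination ((1:ℝ)/9 * ((A 0 + B 0 - 2*C 0)^2 + (A 1 + B 1 - 2*C 1)^2
      - (B 0 + C 0 - 2*A 0)^2 - (B 1 + C 1 - 2*A 1)^2)) * htA2
  · rw [EuclideanSpace.dist_eq, EuclideanSpace.dist_eq]
    congr 1
    rw [Fin.sum_univ_two, Fin.sum_univ_two]
    simp only [Real.dist_eq, sq_abs]
    rw [g10, g11, g20, g21, g30, g31, hA₁0, hA₁1, hB₁0, hB₁1, hC₁0, hC₁1]
    linear_combination ((1:ℝ)/9 * ((B 0 + C 0 - 2*A 0)^2 + (B 1 + C 1 - 2*A 1)^2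
      - (C 0 + A 0 - 2*B 0)^2 - (C 1 + A 1 - 2*B 1)^2)) * htA2
  · ext i
    fin_cases i
    · show (3:ℝ)⁻¹ * (G₁ 0 + G₂ 0 + G₃ 0) = (3:ℝ)⁻¹ * (A 0 + B 0 + C 0)
      rw [g10, g20, g30, hA₁0, hB₁0, hC₁0]; ring
    · show (3:ℝ)⁻¹ * (G₁ 1 + G₂ 1 + G₃ 1) = (3:ℝ)⁻¹ * (A 1 + B 1 + C 1)
      rw [g11, g21, g31, hA₁1, hB₁1, hC₁1]; ring
end
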